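/- arXiv:0812.2820 — 3 statements merged into one kernel-verified Lean document; each statement's English description precedes it below -/
import Mathlib

section
/- Work in the ring of formal power series in three variables x, y, z over ℤ. Let P(x,y,z) be the series whose coefficient of x^k y^m z^n is p_{n,m,k}; let P_0(x,z) be the series whose coefficient of x^k y^m z^n is p_{n,0,k} if m = 0 and 0 otherwise; and let W(x,y,z) (representing V_0(x,yz)) be the series whose coefficient of x^k y^m z^n is v_{n,0,k} if m = n and 0 otherwise. Then P(x,y,z) = W(x,y,z)·(1 + z·(x + P_0(x,z) − 1)·P(x,y,z)). -/
/-- The height of a path (list of steps; `true` = up step `U`, `false` = down step `D`)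
after all its steps: #U − #D. -/
def height (l : List Bool) : ℤ := (l.count true : ℤ) - (l.count false : ℤ)

/-- `l` is a Dyck path of semilength `n`: `2n` steps ending at height `0`
(equivalently, exactly `n` up steps). It may go below the x-axis. -/
def IsDyck (n : ℕ) (l : List Bool) : Prop := l.length = 2 * n ∧ l.count true = n

/-- The number of flaws: up steps starting at negative height. -/
def flaws (l : List Bool) : ℕ :=
  ((Finset.range l.length).filter
    (fun i => l.getD i false = true ∧ height (l.take i) < 0)).card

/-- The number of peaks: positions where an up step is immediately followed by a down step. -/
def peaks (l : List Bool) : ℕ :=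
  ((Finset.range (l.length - 1)).filter
    (fun i => l.getD i false = true ∧ l.getD (i + 1) false = false)).card

/-- The number of valleys: positions where a down step is immediately followed by an up step. -/
def valleys (l : List Bool) : ℕ :=
  ((Finset.range (l.length - 1)).filter
    (fun i => l.getD i false = false ∧ l.getD (i + 1) false = true)).card

/-- The number of double ascents: positions of two consecutive up steps. -/
def dascents (l : List Bool) : ℕ :=
  ((Finset.range (l.length - 1)).filter
    (fun i => l.getD i false = true ∧ l.getD (i + 1) false = true)).card

/-- The number of double descents: positions of two consecutive down steps. -/
def ddescents (l : List Bool) : ℕ :=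
  ((Finset.range (l.length - 1)).filter
    (fun i => l.getD i false = false ∧ l.getD (i + 1) false = false)).card

/-- `p n m k`: the number of Dyck paths of semilength `n` with `m` flaws and `k` peaks. -/
noncomputable def p (n m k : ℕ) : ℕ :=
  Nat.card {l : List Bool // IsDyck n l ∧ flaws l = m ∧ peaks l = k}

/-- `v n m k`: the number of Dyck paths of semilength `n` with `m` flaws and `k` valleys. -/
noncomputable def v (n m k : ℕ) : ℕ :=
  Nat.card {l : List Bool // IsDyck n l ∧ flaws l = m ∧ valleys l = k}

/-- `a n m k`: the number of Dyck paths of semilength `n` with `m` flaws and `k` double ascents. -/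
noncomputable def a (n m k : ℕ) : ℕ :=
  Nat.card {l : List Bool // IsDyck n l ∧ flaws l = m ∧ dascents l = k}

/-- `d n m k`: the number of Dyck paths of semilength `n` with `m` flaws and `k` double descents. -/
noncomputable def d (n m k : ℕ) : ℕ :=
  Nat.card {l : List Bool // IsDyck n l ∧ flaws l = m ∧ ddescents l = k}

open MvPowerSeries

/-- Coefficient of `x^k y^m z^n` in a three-variable power series
(`x` = `X 0`, `y` = `X 1`, `z` = `X 2`). -/
noncomputable def coeff3 (F : MvPowerSeries (Fin 3) ℤ) (k m n : ℕ) : ℤ :=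
  MvPowerSeries.coeff (R := ℤ)
    (Finsupp.single (0 : Fin 3) k + Finsupp.single (1 : Fin 3) m +
      Finsupp.single (2 : Fin 3) n) F

namespace PMS

def pk : List Bool → ℕ
  | [] => 0
  | a :: t => (if a = true ∧ t.head? = some false then 1 else 0) + pk t

def vl : List Bool → ℕ
  | [] => 0
  | a :: t => (if a = false ∧ t.head? = some true then 1 else 0) + vl t

def fl : ℤ → List Bool → ℕ
  | _, [] => 0
  | h, true :: t => (if h < 0 then 1 else 0) + fl (h + 1) t
  | h, false :: t => fl (h - 1) t

lemma height_nil : height [] = 0 := rfl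

lemma height_cons (a : Bool) (t : List Bool) :
    height (a :: t) = (if a then 1 else -1) + height t := by
  cases a <;> simp [height, List.count_cons] <;> ring

lemma height_append (l1 l2 : List Bool) :
    height (l1 ++ l2) = height l1 + height l2 := by
  simp [height, List.count_append]; ring

lemma length_eq_counts (l : List Bool) : l.length = l.count true + l.count false := by
  induction l with
  | nil => simp
  | cons a t ih =>
    have h1 : (a :: t).count true = t.count true + (if a = true then 1 else 0) := by
      cases a <;> simp
    have h2 : (a :: t).count false = t.count false + (if a = false then 1 else 0) := by
      cases a <;> simp
    rw [List.length_cons, h1, h2]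
    cases a <;> simp <;> omega

lemma height_eq_zero_iff (l : List Bool) :
    height l = 0 ↔ l.count true = l.count false := by
  unfold height; omega

lemma isDyck_iff (n : ℕ) (l : List Bool) :
    IsDyck n l ↔ height l = 0 ∧ l.count true = n := by
  rw [height_eq_zero_iff]; unfold IsDyck
  have := length_eq_counts l
  omega

theorem peaks_eq_pk (l : List Bool) : peaks l = pk l := by
  induction l with
  | nil => simp [peaks, pk]
  | cons a t ih =>
    cases t with
    | nil => simp [peaks, pk]
    | cons b t' =>
      rw [pk, ← ih]
      unfold peaks
      rw [Finset.card_filter, Finset.card_filter]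
      have hlen : (a :: b :: t').length - 1 = ((b :: t').length - 1) + 1 := by
        simp
      rw [hlen, Finset.sum_range_succ']
      simp only [List.getD_cons_succ, List.getD_cons_zero, List.head?_cons,
        Option.some.injEq]
      rw [add_comm]

theorem valleys_eq_vl (l : List Bool) : valleys l = vl l := by
  induction l with
  | nil => simp [valleys, vl]
  | cons a t ih =>
    cases t with
    | nil => simp [valleys, vl]
    | cons b t' =>
      rw [vl, ← ih]
      unfold valleys
      rw [Finset.card_filter, Finset.card_filter]
      have hlen : (a :: b :: t').length - 1 = ((b :: t').length - 1) + 1 := by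
        simp
      rw [hlen, Finset.sum_range_succ']
      simp only [List.getD_cons_succ, List.getD_cons_zero, List.head?_cons,
        Option.some.injEq]
      rw [add_comm]

lemma fl_cons (h : ℤ) (a : Bool) (t : List Bool) :
    fl h (a :: t) = (if a = true ∧ h < 0 then 1 else 0)
      + fl (h + (if a then 1 else -1)) t := by
  cases a
  · show fl (h - 1) t = _
    norm_num
    rw [show h + -1 = h - 1 by ring]
  · show (if h < 0 then 1 else 0) + fl (h + 1) t = _
    norm_num

theorem flAux (l : List Bool) : ∀ h : ℤ,
    (∑ i ∈ Finset.range l.length,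
      if l.getD i false = true ∧ h + height (l.take i) < 0 then 1 else 0) = fl h l := by
  induction l with
  | nil => simp [fl]
  | cons a t ih =>
    intro h
    rw [List.length_cons, Finset.sum_range_succ']
    simp only [List.getD_cons_succ, List.getD_cons_zero, List.take_succ_cons,
      List.take_zero, height_nil, add_zero, height_cons, ← add_assoc]
    rw [ih (h + if a then 1 else -1), fl_cons]
    rw [add_comm]

theorem flaws_eq_fl (l : List Bool) : flaws l = fl 0 l := by
  rw [flaws, Finset.card_filter, ← flAux l 0]
  congr 1; funext i; congr 1
  simp

lemma fl_append (l2 : List Bool) : ∀ (l1 : List Bool) (h : ℤ),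
    fl h (l1 ++ l2) = fl h l1 + fl (h + height l1) l2 := by
  intro l1
  induction l1 with
  | nil => intro h; simp [fl, height_nil]
  | cons a t ih =>
    intro h
    have harg : h + height (a :: t) = (h + if a then 1 else -1) + height t := by
      rw [height_cons]; ring
    rw [List.cons_append, fl_cons, ih, fl_cons, harg]
    omega

lemma pk_cons (a : Bool) (t : List Bool) :
    pk (a :: t) = (if a = true ∧ t.head? = some false then 1 else 0) + pk t := rfl

lemma pk_append (l1 l2 : List Bool) :
    pk (l1 ++ l2) = pk l1 +
      (if l1.getLast? = some true ∧ l2.head? = some false then 1 else 0) + pk l2 := by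
  induction l1 with
  | nil => simp [pk]
  | cons a t ih =>
    rw [List.cons_append, pk_cons, ih, pk_cons]
    cases t with
    | nil => simp; omega
    | cons b t' => simp only [List.cons_append, List.head?_cons,
        List.getLast?_cons_cons, Option.some.injEq]; omega

lemma count_true_cons (a : Bool) (t : List Bool) :
    (a :: t).count true = t.count true + (if a = true then 1 else 0) := by
  cases a <;> simp

lemma fl_le_count (l : List Bool) : ∀ h : ℤ, fl h l ≤ l.count true := by
  induction l with
  | nil => simp [fl]
  | cons a t ih =>
    intro h
    rw [fl_cons, count_true_cons]
    have h1 := ih (h + if a then 1 else -1)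
    cases a <;> simp at h1 ⊢
    · omega
    · split_ifs <;> omega

def Nneg (l : List Bool) : Prop := ∀ i, 0 ≤ height (l.take i)
def Npos (l : List Bool) : Prop := ∀ i, height (l.take i) ≤ 0

lemma fl_eq_zero (l : List Bool) : ∀ h : ℤ,
    (∀ i, 0 ≤ h + height (l.take i)) → fl h l = 0 := by
  induction l with
  | nil => simp [fl]
  | cons a t ih =>
    intro h hh
    rw [fl_cons]
    have h0 : 0 ≤ h := by have := hh 0; simpa [height_nil] using this
    have hrec : ∀ i, 0 ≤ (h + if a then 1 else -1) + height (t.take i) := by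
      intro i
      have := hh (i + 1)
      rw [List.take_succ_cons, height_cons] at this
      linarith
    rw [ih _ hrec]
    simp; omega

lemma fl_pos (l : List Bool) : ∀ h : ℤ,
    0 ≤ h + height l → (∃ i, h + height (l.take i) < 0) → 0 < fl h l := by
  induction l with
  | nil =>
    rintro h hend ⟨i, hi⟩
    simp only [List.take_nil, height_nil, add_zero] at hi hend
    omega
  | cons a t ih =>
    rintro h hend ⟨i, hi⟩
    rw [height_cons] at hend
    cases a with
    | true =>
      simp only [fl]
      by_cases hneg : h < 0
      · simp [hneg]
      · have hi1 : i ≠ 0 := by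
          rintro rfl; simp [height_nil] at hi; omega
        obtain ⟨j, rfl⟩ := Nat.exists_eq_succ_of_ne_zero hi1
        rw [List.take_succ_cons, height_cons] at hi
        have hrec : 0 < fl (h + 1) t := by
          apply ih
          · simp at hend ⊢; linarith
          · exact ⟨j, by simp at hi ⊢; linarith⟩
        omega
    | false =>
      simp only [fl]
      apply ih
      · simp at hend ⊢; linarith
      · cases i with
        | zero =>
          simp [height_nil] at hi
          exact ⟨0, by simp [height_nil]; omega⟩
        | succ j =>
          rw [List.take_succ_cons, height_cons] at hi
          exact ⟨j, by simp at hi ⊢; linarith⟩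

lemma fl_eq_count (l : List Bool) : ∀ h : ℤ,
    (∀ i, h + height (l.take i) ≤ 0) → fl h l = l.count true := by
  induction l with
  | nil => simp [fl]
  | cons a t ih =>
    intro h hh
    rw [fl_cons, count_true_cons]
    have hrec : ∀ i, (h + if a then 1 else -1) + height (t.take i) ≤ 0 := by
      intro i
      have := hh (i + 1)
      rw [List.take_succ_cons, height_cons] at this
      linarith
    rw [ih _ hrec]
    cases a with
    | true =>
      have := hh 1
      rw [List.take_succ_cons, List.take_zero, height_cons, height_nil] at this
      have hneg : h < 0 := by simp at this; linarith
      simp [hneg]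
      omega
    | false => simp
    
lemma fl_lt_count (l : List Bool) : ∀ h : ℤ, h ≤ 0 →
    (∃ i, 0 < h + height (l.take i)) → fl h l < l.count true := by
  induction l with
  | nil =>
    rintro h hle ⟨i, hi⟩
    simp only [List.take_nil, height_nil, add_zero] at hi
    omega
  | cons a t ih =>
    rintro h hle ⟨i, hi⟩
    rw [count_true_cons]
    cases a with
    | true =>
      simp only [fl]
      by_cases hneg : h < 0
      · have hi1 : i ≠ 0 := by rintro rfl; simp [height_nil] at hi; omega
        obtain ⟨j, rfl⟩ := Nat.exists_eq_succ_of_ne_zero hi1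
        rw [List.take_succ_cons, height_cons] at hi
        have hrec : fl (h + 1) t < t.count true := by
          apply ih
          · omega
          · exact ⟨j, by simp at hi ⊢; linarith⟩
        simp [hneg]
        omega
      · have := fl_le_count t (h + 1)
        simp [hneg]
        omega
    | false =>
      simp only [fl]
      have hrec : fl (h - 1) t < t.count true := by
        apply ih
        · omega
        · cases i with
          | zero => simp [height_nil] at hi; omega
          | succ j =>
            rw [List.take_succ_cons, height_cons] at hi
            exact ⟨j, by simp at hi ⊢; linarith⟩
      simp
      omega

lemma nneg_iff (l : List Bool) (h0 : height l = 0) : fl 0 l = 0 ↔ Nneg l := by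
  constructor
  · intro hfl
    by_contra hn
    unfold Nneg at hn
    push_neg at hn
    obtain ⟨i, hi⟩ := hn
    have := fl_pos l 0 (by omega) ⟨i, by omega⟩
    omega
  · intro hn
    exact fl_eq_zero l 0 (fun i => by have := hn i; omega)

lemma npos_iff (l : List Bool) : fl 0 l = l.count true ↔ Npos l := by
  constructor
  · intro hfl
    by_contra hn
    unfold Npos at hn
    push_neg at hn
    obtain ⟨i, hi⟩ := hn
    have := fl_lt_count l 0 le_rfl ⟨i, by omega⟩
    omega
  · intro hn
    exact fl_eq_count l 0 (fun i => by have := hn i; omega)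

lemma count_map_not (l : List Bool) :
    (l.map not).count true = l.count false ∧ (l.map not).count false = l.count true := by
  induction l with
  | nil => simp
  | cons a t ih => cases a <;> simp [List.count_cons] <;> omega

lemma height_map_not (l : List Bool) : height (l.map not) = - height l := by
  unfold height
  rw [(count_map_not l).1, (count_map_not l).2]
  ring

lemma vl_map_not (l : List Bool) : vl (l.map not) = pk l := by
  induction l with
  | nil => simp [vl, pk]
  | cons a t ih =>
    rw [List.map_cons, vl, pk, ih]
    congr 1
    cases t with
    | nil => cases a <;> simp
    | cons b t' => cases a <;> cases b <;> simp

lemma map_not_invol : Function.Involutive (fun l : List Bool => l.map not) := by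
  intro l
  simp [List.map_map, Function.comp_def]

section C3
variable {α : Type*}

lemma take_app_left (w x : List Bool) {j : ℕ} (hj : j ≤ w.length) :
    (w ++ x).take j = w.take j := by
  rw [List.take_append, Nat.sub_eq_zero_of_le hj, List.take_zero,
    List.append_nil]

lemma take_app_one (w : List Bool) (b : Bool) (s : List Bool) :
    (w ++ b :: s).take (w.length + 1) = w ++ [b] := by
  rw [List.take_append, List.take_of_length_le (by omega)]
  congr 1
  simp

lemma height_one (b : Bool) : height [b] = if b then 1 else -1 := by
  rw [height_cons, height_nil, add_zero]

lemma getLast_false_of_nneg {a : List Bool} (han : Nneg a) (ha0 : height a = 0)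
    (hne : a ≠ []) : a.getLast? = some false := by
  rw [List.getLast?_eq_getLast hne]
  by_contra hc
  have hlast : a.getLast hne = true := by
    cases h : a.getLast hne
    · exact absurd (by rw [h]) hc
    · rfl
  have hsplit : a.dropLast ++ [a.getLast hne] = a := List.dropLast_append_getLast hne
  have hh : height a = height a.dropLast + 1 := by
    conv_lhs => rw [← hsplit]
    rw [height_append, height_one, hlast]
    simp
  have hd : 0 ≤ height a.dropLast := by
    have := han (a.length - 1)
    rwa [← List.dropLast_eq_take] at this
  omega

lemma head_true_of_nneg {a : List Bool} (han : Nneg a) {b : Bool} {t : List Bool}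
    (hbt : a = b :: t) : b = true := by
  have := han 1
  rw [hbt, List.take_succ_cons, List.take_zero, height_cons, height_nil] at this
  cases b
  · simp at this
  · rfl

lemma fl_nneg_zero {a : List Bool} (han : Nneg a) {h : ℤ} (hh : 0 ≤ h) :
    fl h a = 0 :=
  fl_eq_zero a h (fun i => by have := han i; omega)

lemma join_stats (w a r : List Bool) (hw0 : height w = 0) (hwp : Npos w)
    (ha0 : height a = 0) (han : Nneg a) (hr0 : height r = 0) :
    height (w ++ true :: (a ++ false :: r)) = 0
    ∧ (w ++ true :: (a ++ false :: r)).count true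
        = w.count true + 1 + a.count true + r.count true
    ∧ fl 0 (w ++ true :: (a ++ false :: r)) = w.count true + fl 0 r
    ∧ pk (w ++ true :: (a ++ false :: r)) = pk w + ((if a = [] then 1 else pk a) + pk r)
    ∧ ¬ Npos (w ++ true :: (a ++ false :: r)) := by
  refine ⟨?_, ?_, ?_, ?_, ?_⟩
  · rw [height_append, height_cons, height_append, height_cons, hw0, ha0, hr0]
    norm_num
  · simp [List.count_append, List.count_cons]
    omega
  · rw [fl_append, hw0, add_zero]
    have h1 : fl 0 (true :: (a ++ false :: r)) = fl 1 (a ++ false :: r) := by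
      simp [fl]
    have h2 : fl 1 (a ++ false :: r) = fl (1 + height a) (false :: r) := by
      rw [fl_append, fl_nneg_zero han (by norm_num), zero_add]
    have h3 : fl (1 + height a) (false :: r) = fl 0 r := by
      rw [ha0, add_zero]
      show fl (1 - 1) r = fl 0 r
      norm_num
    rw [h1, h2, h3, (npos_iff w).mpr hwp]
  · rw [pk_append]
    rw [if_neg (by simp), add_zero]
    congr 1
    cases ha : a with
    | nil =>
      simp only [List.nil_append, if_pos rfl]
      rw [pk_cons, pk_cons]
      simp
    | cons b t =>
      have hb : b = true := head_true_of_nneg han ha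
      subst hb
      rw [← ha, if_neg (by rw [ha]; simp)]
      rw [pk_cons]
      have hh : ((a ++ false :: r).head? = some false) = False := by
        rw [ha]; simp
      rw [if_neg (by rw [ha]; simp), zero_add, pk_append]
      rw [getLast_false_of_nneg han ha0 (by rw [ha]; simp)]
      rw [if_neg (by simp)]
      rw [pk_cons]
      simp
  · intro hnp
    have := hnp (w.length + 1)
    rw [take_app_one, height_append, hw0, height_one] at this
    simp at this

end C3

section C4

lemma height_take_succ (l : List Bool) {i : ℕ} (h : i < l.length) :
    height (l.take (i+1)) = height (l.take i) + (if l.getD i false then 1 else -1) := by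
  have h1 : l.take (i+1) = l.take i ++ [l.getD i false] := by
    rw [List.take_succ]
    congr 1
    rw [List.getElem?_eq_getElem h, List.getD_eq_getElem l false h]
    rfl
  rw [h1, height_append, height_one]

theorem decomp_exists {l : List Bool} (h0 : height l = 0) (hnp : ¬ Npos l) :
    ∃ w a r, (height w = 0 ∧ Npos w ∧ height a = 0 ∧ Nneg a ∧ height r = 0)
      ∧ l = w ++ true :: (a ++ false :: r) := by
  classical
  have hex : ∃ j, 1 ≤ height (l.take j) := by
    unfold Npos at hnp; push_neg at hnp
    obtain ⟨i, hi⟩ := hnp; exact ⟨i, by omega⟩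
  have hj1 : 1 ≤ height (l.take (Nat.find hex)) := Nat.find_spec hex
  have hjmin : ∀ i, i < Nat.find hex → height (l.take i) ≤ 0 := fun i hi => by
    have := Nat.find_min hex hi; omega
  have hne : Nat.find hex ≠ 0 := by
    intro h; rw [h] at hj1; simp [height_nil] at hj1
  obtain ⟨j', hj'⟩ := Nat.exists_eq_succ_of_ne_zero hne
  rw [hj'] at hj1 hjmin
  simp only [Nat.succ_eq_add_one] at hj1 hjmin
  have hjlen : j' + 1 ≤ l.length := by
    by_contra hgt
    push_neg at hgt
    rw [List.take_of_length_le (by omega), h0] at hj1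
    omega
  have hstep := height_take_succ l (show j' < l.length by omega)
  have hmin' : height (l.take j') ≤ 0 := hjmin j' (by omega)
  have hgd : l.getD j' false = true := by
    cases hb : l.getD j' false
    · rw [hb] at hstep; simp at hstep; omega
    · rfl
  have hw0 : height (l.take j') = 0 := by
    rw [hgd] at hstep; simp at hstep; omega
  have hsplit : l = l.take j' ++ true :: l.drop (j'+1) := by
    conv_lhs => rw [← List.take_append_drop j' l]
    congr 1
    rw [List.drop_eq_getElem_cons (show j' < l.length by omega)]
    congr 1
    rw [← List.getD_eq_getElem l false (show j' < l.length by omega), hgd]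
  have hwp : Npos (l.take j') := by
    intro i
    rw [List.take_take]
    exact hjmin _ (by omega)
  -- second stage
  have hrest : height (l.drop (j'+1)) = -1 := by
    have hh : height l = height (l.take (j'+1)) + height (l.drop (j'+1)) := by
      conv_lhs => rw [← List.take_append_drop (j'+1) l]
      rw [height_append]
    rw [hgd] at hstep
    simp at hstep
    omega
  set rest := l.drop (j'+1) with hrestdef
  have hex2 : ∃ i, height (rest.take i) ≤ -1 :=
    ⟨rest.length, by rw [List.take_length]; omega⟩
  have hi1 : height (rest.take (Nat.find hex2)) ≤ -1 := Nat.find_spec hex2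
  have himin : ∀ i, i < Nat.find hex2 → 0 ≤ height (rest.take i) := fun i hi => by
    have := Nat.find_min hex2 hi; omega
  have hne2 : Nat.find hex2 ≠ 0 := by
    intro h; rw [h] at hi1; simp [height_nil] at hi1
  obtain ⟨i', hi'⟩ := Nat.exists_eq_succ_of_ne_zero hne2
  have hfle : Nat.find hex2 ≤ rest.length := Nat.find_le (by rw [List.take_length]; omega)
  rw [hi'] at hi1 himin hfle
  simp only [Nat.succ_eq_add_one] at hi1 himin hfle
  have hstep2 := height_take_succ rest (show i' < rest.length by omega)
  have hmin2' : 0 ≤ height (rest.take i') := himin i' (by omega)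
  have hgd2 : rest.getD i' false = false := by
    cases hb : rest.getD i' false
    · rfl
    · rw [hb] at hstep2; simp at hstep2; omega
  have ha0 : height (rest.take i') = 0 := by
    rw [hgd2] at hstep2; simp at hstep2; omega
  have hsplit2 : rest = rest.take i' ++ false :: rest.drop (i'+1) := by
    conv_lhs => rw [← List.take_append_drop i' rest]
    congr 1
    rw [List.drop_eq_getElem_cons (show i' < rest.length by omega)]
    congr 1
    rw [← List.getD_eq_getElem rest false (show i' < rest.length by omega), hgd2]
  have han : Nneg (rest.take i') := by
    intro i
    rw [List.take_take]
    exact himin _ (by omega)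
  have hr0 : height (rest.drop (i'+1)) = 0 := by
    have hh : height rest = height (rest.take (i'+1)) + height (rest.drop (i'+1)) := by
      conv_lhs => rw [← List.take_append_drop (i'+1) rest]
      rw [height_append]
    rw [hgd2] at hstep2
    simp at hstep2
    omega
  refine ⟨l.take j', rest.take i', rest.drop (i'+1), ⟨hw0, hwp, ha0, han, hr0⟩, ?_⟩
  rw [hsplit]
  congr 2

theorem decomp_unique {w a r w' a' r' : List Bool}
    (hw0 : height w = 0) (hwp : Npos w) (ha0 : height a = 0) (han : Nneg a)
    (hw0' : height w' = 0) (hwp' : Npos w') (ha0' : height a' = 0) (han' : Nneg a')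
    (heq : w ++ true :: (a ++ false :: r) = w' ++ true :: (a' ++ false :: r')) :
    w = w' ∧ a = a' ∧ r = r' := by
  have aux : ∀ (u u' : List Bool) (s s' : List Bool), height u = 0 → Npos u' →
      u ++ true :: s = u' ++ true :: s' → ¬ (u.length < u'.length) := by
    intro u u' s s' hu0 hup' he hlt
    have h1 : (u ++ true :: s).take (u.length + 1) = u ++ [true] := take_app_one u true s
    have h2 : (u' ++ true :: s').take (u.length + 1) = u'.take (u.length + 1) :=
      take_app_left u' (true :: s') (by omega)
    have h3 : height (u ++ [true]) = 1 := by
      rw [height_append, hu0, height_one]; simp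
    have h4 := hup' (u.length + 1)
    rw [← h2, ← he, h1, h3] at h4
    omega
  have hlw : w.length = w'.length := by
    have n1 := aux w w' _ _ hw0 hwp' heq
    have n2 := aux w' w _ _ hw0' hwp heq.symm
    omega
  obtain ⟨hww, htail⟩ := List.append_inj heq hlw
  have htail2 : a ++ false :: r = a' ++ false :: r' := by
    injection htail
  have aux2 : ∀ (u u' : List Bool) (s s' : List Bool), height u = 0 → Nneg u' →
      u ++ false :: s = u' ++ false :: s' → ¬ (u.length < u'.length) := by
    intro u u' s s' hu0 hun' he hlt
    have h1 : (u ++ false :: s).take (u.length + 1) = u ++ [false] := take_app_one u false s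
    have h2 : (u' ++ false :: s').take (u.length + 1) = u'.take (u.length + 1) :=
      take_app_left u' (false :: s') (by omega)
    have h3 : height (u ++ [false]) = -1 := by
      rw [height_append, hu0, height_one]; simp
    have h4 := hun' (u.length + 1)
    rw [← h2, ← he, h1, h3] at h4
    omega
  have hla : a.length = a'.length := by
    have n1 := aux2 a a' _ _ ha0 han' htail2
    have n2 := aux2 a' a _ _ ha0' han htail2.symm
    omega
  obtain ⟨haa, htail3⟩ := List.append_inj htail2 hla
  have hrr : r = r' := by injection htail3
  exact ⟨hww, haa, hrr⟩

end C4

section C5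

lemma finite_of_len_le (L : ℕ) (Q : List Bool → Prop) (hQ : ∀ l, Q l → l.length ≤ L) :
    Finite {l : List Bool // Q l} := by
  apply Finite.of_injective
    (fun x : {l : List Bool // Q l} =>
      ((fun i : Fin L => x.1.getD i false, ⟨x.1.length, Nat.lt_succ_of_le (hQ _ x.2)⟩) :
        (Fin L → Bool) × Fin (L + 1)))
  rintro ⟨x, hx⟩ ⟨y, hy⟩ hxy
  simp only [Prod.mk.injEq, Fin.mk.injEq] at hxy
  obtain ⟨hf, hl⟩ := hxy
  apply Subtype.ext
  apply List.ext_getElem hl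
  intro i h1 h2
  have hi : i < L := lt_of_lt_of_le h1 (hQ _ hx)
  have := congrFun hf ⟨i, hi⟩
  simp only at this
  rwa [List.getD_eq_getElem x false h1, List.getD_eq_getElem y false h2] at this

lemma card_fiber_sum {A β : Type*} [Finite A] (f : A → β) (s : Finset β)
    (h : ∀ a, f a ∈ s) :
    Nat.card A = ∑ y ∈ s, Nat.card {a : A // f a = y} := by
  classical
  have e : A ≃ Σ y : s, {a : A // f a = y.1} := by
    refine ⟨fun a => ⟨⟨f a, h a⟩, ⟨a, rfl⟩⟩, fun x => x.2.1, fun a => rfl, ?_⟩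
    rintro ⟨⟨y, hy⟩, a, ha⟩
    have ha' : f a = y := ha
    subst ha'
    rfl
  rw [Nat.card_congr e]
  have : ∀ y : β, Fintype {a : A // f a = y} := fun y => Fintype.ofFinite _
  have hft : Fintype A := Fintype.ofFinite _
  rw [Nat.card_eq_fintype_card, Fintype.card_sigma]
  rw [← Finset.sum_coe_sort s (fun y => Nat.card {a : A // f a = y})]
  congr 1
  funext y
  rw [Nat.card_eq_fintype_card]

lemma card_subtype_iff {α : Type*} {P Q : α → Prop} (h : ∀ x, P x ↔ Q x) :
    Nat.card {x // P x} = Nat.card {x // Q x} :=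
  Nat.card_congr (Equiv.subtypeEquivRight h)

lemma card_subtype_empty {α : Type*} {P : α → Prop} (h : ∀ x, ¬ P x) :
    Nat.card {x // P x} = 0 := by
  have : IsEmpty {x // P x} := ⟨fun x => h x.1 x.2⟩
  exact Nat.card_of_isEmpty

lemma card_split_prod {A B : Type*} (PA : A → Prop) (PB : B → Prop) :
    Nat.card {x : A × B // PA x.1 ∧ PB x.2}
      = Nat.card {a : A // PA a} * Nat.card {b : B // PB b} := by
  rw [← Nat.card_prod]
  exact Nat.card_congr (Equiv.subtypeProdEquivProd)

lemma card_flatten {α : Type*} (P Q : α → Prop) :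
    Nat.card {x : {y : α // P y} // Q x.1} = Nat.card {y : α // P y ∧ Q y} :=
  Nat.card_congr ⟨fun x => ⟨x.1.1, x.1.2, x.2⟩, fun y => ⟨⟨y.1, y.2.1⟩, y.2.2⟩,
    fun x => rfl, fun y => rfl⟩

lemma card_two_stats {A B : Type*}
    (f1 f2 f3 : A → ℕ) (g1 g2 g3 : B → ℕ) (s1 s2 s3 : ℕ)
    (hfin : Finite {x : A × B // f1 x.1 + g1 x.2 = s1 ∧ f2 x.1 + g2 x.2 = s2
        ∧ f3 x.1 + g3 x.2 = s3}) :
    Nat.card {x : A × B // f1 x.1 + g1 x.2 = s1 ∧ f2 x.1 + g2 x.2 = s2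
        ∧ f3 x.1 + g3 x.2 = s3}
      = ∑ q ∈ Finset.HasAntidiagonal.antidiagonal s1, ∑ t ∈ Finset.HasAntidiagonal.antidiagonal s2,
          ∑ u ∈ Finset.HasAntidiagonal.antidiagonal s3,
          Nat.card {a : A // f1 a = q.1 ∧ f2 a = t.1 ∧ f3 a = u.1}
            * Nat.card {b : B // g1 b = q.2 ∧ g2 b = t.2 ∧ g3 b = u.2} := by
  classical
  haveI := hfin
  have hmap : ∀ x : {x : A × B // f1 x.1 + g1 x.2 = s1 ∧ f2 x.1 + g2 x.2 = s2
      ∧ f3 x.1 + g3 x.2 = s3},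
      (((f1 x.1.1, g1 x.1.2), (f2 x.1.1, g2 x.1.2)), (f3 x.1.1, g3 x.1.2)) ∈
      ((Finset.HasAntidiagonal.antidiagonal s1 ×ˢ Finset.HasAntidiagonal.antidiagonal s2) ×ˢ Finset.HasAntidiagonal.antidiagonal s3) := by
    rintro ⟨⟨xa, xb⟩, hx1, hx2, hx3⟩
    simp only [Finset.mem_product, Finset.HasAntidiagonal.mem_antidiagonal]
    exact ⟨⟨hx1, hx2⟩, hx3⟩
  rw [card_fiber_sum _ _ hmap]
  rw [Finset.sum_product, Finset.sum_product]
  apply Finset.sum_congr rfl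
  intro q hq
  apply Finset.sum_congr rfl
  intro t ht
  apply Finset.sum_congr rfl
  intro u hu
  rw [Finset.HasAntidiagonal.mem_antidiagonal] at hq ht hu
  rw [Nat.card_congr
    (Equiv.subtypeSubtypeEquivSubtypeInter
      (fun x : A × B => f1 x.1 + g1 x.2 = s1 ∧ f2 x.1 + g2 x.2 = s2 ∧ f3 x.1 + g3 x.2 = s3)
      (fun x : A × B => (((f1 x.1, g1 x.2), (f2 x.1, g2 x.2)), (f3 x.1, g3 x.2))
        = ((q, t), u)))]
  rw [card_subtype_iff (Q := fun x : A × B =>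
      (f1 x.1 = q.1 ∧ f2 x.1 = t.1 ∧ f3 x.1 = u.1)
        ∧ (g1 x.2 = q.2 ∧ g2 x.2 = t.2 ∧ g3 x.2 = u.2))]
  · exact card_split_prod (fun a => f1 a = q.1 ∧ f2 a = t.1 ∧ f3 a = u.1)
      (fun b => g1 b = q.2 ∧ g2 b = t.2 ∧ g3 b = u.2)
  · intro x
    simp only [Prod.mk.injEq, Prod.ext_iff]
    omega

end C5

section C6

def apk (a : List Bool) : ℕ := if a = [] then 1 else peaks a

noncomputable def archCount (n2 k2 : ℕ) : ℕ :=
  if n2 = 0 then (if k2 = 1 then 1 else 0) else p n2 0 k2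

lemma finite_S (n m k : ℕ) : Finite {l : List Bool // IsDyck n l ∧ flaws l = m ∧ peaks l = k} :=
  finite_of_len_le (2 * n) _ (fun l h => le_of_eq h.1.1)

lemma p_le_zero {n m k : ℕ} (h : n < m) : p n m k = 0 := by
  apply card_subtype_empty
  rintro l ⟨hd, hf, -⟩
  have h1 : flaws l ≤ l.count true := by
    rw [flaws_eq_fl]; exact fl_le_count l 0
  rw [hd.2, hf] at h1
  omega

lemma flaws_nil : flaws ([] : List Bool) = 0 := rfl
lemma peaks_nil : peaks ([] : List Bool) = 0 := rfl
lemma valleys_nil : valleys ([] : List Bool) = 0 := rfl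

lemma isDyck_zero {l : List Bool} (h : IsDyck 0 l) : l = [] := by
  have := h.1; simp at this; exact this

lemma p_zero_zero (k : ℕ) : p 0 0 k = if k = 0 then 1 else 0 := by
  split_ifs with hk
  · subst hk
    unfold p
    rw [card_subtype_iff (Q := fun l : List Bool => l = [])]
    · exact Nat.card_unique
    · intro l
      constructor
      · rintro ⟨hd, -, -⟩; exact isDyck_zero hd
      · rintro rfl
        exact ⟨⟨rfl, rfl⟩, flaws_nil, peaks_nil⟩
  · apply card_subtype_empty
    rintro l ⟨hd, -, hp⟩
    rw [isDyck_zero hd] at hp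
    rw [peaks_nil] at hp
    exact hk hp.symm

lemma take_map_not (l : List Bool) (i : ℕ) :
    (l.map not).take i = (l.take i).map not := List.map_take.symm

lemma npos_map_not (l : List Bool) : Nneg (l.map not) ↔ Npos l := by
  constructor <;> intro h i <;> have hi := h i
  · rw [take_map_not, height_map_not] at hi; omega
  · rw [take_map_not, height_map_not]; omega

lemma refl_fwd {n k : ℕ} {l : List Bool} (hd : IsDyck n l) (hf : flaws l = n)
    (hp : peaks l = k) :
    IsDyck n (l.map not) ∧ flaws (l.map not) = 0 ∧ valleys (l.map not) = k := by
  rw [isDyck_iff] at hd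
  have h0 : height l = 0 := hd.1
  have hcf : l.count false = n := by
    rw [height_eq_zero_iff] at h0; omega
  refine ⟨?_, ?_, ?_⟩
  · rw [isDyck_iff, height_map_not, (count_map_not l).1, h0, hcf]
    exact ⟨by ring, rfl⟩
  · rw [flaws_eq_fl]
    rw [nneg_iff _ (by rw [height_map_not, h0]; ring), npos_map_not]
    rw [← npos_iff, ← flaws_eq_fl, hd.2, hf]
  · rw [valleys_eq_vl, vl_map_not, ← peaks_eq_pk, hp]

lemma refl_bwd {n k : ℕ} {l : List Bool} (hd : IsDyck n l) (hf : flaws l = 0)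
    (hv : valleys l = k) :
    IsDyck n (l.map not) ∧ flaws (l.map not) = n ∧ peaks (l.map not) = k := by
  rw [isDyck_iff] at hd
  have h0 : height l = 0 := hd.1
  have hcf : l.count false = n := by
    rw [height_eq_zero_iff] at h0; omega
  have hnneg : Nneg l := by
    rw [← nneg_iff _ h0, ← flaws_eq_fl]; exact hf
  refine ⟨?_, ?_, ?_⟩
  · rw [isDyck_iff, height_map_not, (count_map_not l).1, h0, hcf]
    exact ⟨by ring, rfl⟩
  · rw [flaws_eq_fl]
    have hc : (l.map not).count true = n := by rw [(count_map_not l).1, hcf]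
    rw [← hc, npos_iff]
    intro i
    rw [take_map_not, height_map_not]
    have := hnneg i
    omega
  · have := vl_map_not (l.map not)
    have h2 : (l.map not).map not = l := map_not_invol l
    rw [h2] at this
    rw [peaks_eq_pk, ← this, ← valleys_eq_vl, hv]

lemma p_reflect (n k : ℕ) : p n n k = v n 0 k := by
  apply Nat.card_congr
  refine ⟨fun x => ⟨x.1.map not, ?_⟩, fun y => ⟨y.1.map not, ?_⟩, ?_, ?_⟩
  · obtain ⟨l, hd, hf, hp⟩ := x
    exact refl_fwd hd hf hp
  · obtain ⟨l, hd, hf, hv⟩ := y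
    obtain ⟨h1, h2, h3⟩ := refl_bwd hd hf hv
    exact ⟨h1, h2, h3⟩
  · intro x
    apply Subtype.ext
    exact map_not_invol x.1
  · intro y
    apply Subtype.ext
    exact map_not_invol y.1

lemma nneg_nil : Nneg ([] : List Bool) := by
  intro i; simp [height_nil]

lemma card_arch (n2 k2 : ℕ) :
    Nat.card {a : List Bool // (height a = 0 ∧ Nneg a) ∧ apk a = k2
      ∧ a.count true = n2} = archCount n2 k2 := by
  unfold archCount
  by_cases hn2 : n2 = 0
  · subst hn2
    by_cases hk2 : k2 = 1
    · subst hk2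
      rw [if_pos rfl, if_pos rfl]
      rw [card_subtype_iff (Q := fun a : List Bool => a = [])]
      · exact Nat.card_unique
      · intro a
        constructor
        · rintro ⟨⟨h0, -⟩, -, hc⟩
          rw [height_eq_zero_iff] at h0
          have := length_eq_counts a
          exact List.eq_nil_of_length_eq_zero (by omega)
        · rintro rfl
          exact ⟨⟨rfl, nneg_nil⟩, rfl, rfl⟩
    · rw [if_pos rfl, if_neg hk2]
      apply card_subtype_empty
      rintro a ⟨⟨h0, -⟩, hap, hc⟩
      rw [height_eq_zero_iff] at h0
      have := length_eq_counts a
      have ha : a = [] := List.eq_nil_of_length_eq_zero (by omega)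
      rw [ha] at hap
      exact hk2 (by rw [← hap]; rfl)
  · rw [if_neg hn2]
    unfold p
    apply card_subtype_iff
    intro a
    constructor
    · rintro ⟨⟨h0, hn⟩, hap, hc⟩
      have hane : a ≠ [] := by
        rintro rfl
        simp at hc
        omega
      rw [apk, if_neg hane] at hap
      refine ⟨(isDyck_iff _ _).mpr ⟨h0, hc⟩, ?_, hap⟩
      rw [flaws_eq_fl, nneg_iff _ h0]
      exact hn
    · rintro ⟨hd, hf, hp⟩
      rw [isDyck_iff] at hd
      have hane : a ≠ [] := by
        rintro rfl
        have := hd.2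
        simp at this
        omega
      refine ⟨⟨hd.1, ?_⟩, ?_, hd.2⟩
      · rw [← nneg_iff _ hd.1, ← flaws_eq_fl]; exact hf
      · rw [apk, if_neg hane]; exact hp

end C6

section C7

lemma apk_eq_pk_form (a : List Bool) : (if a = [] then 1 else pk a) = apk a := by
  unfold apk
  split_ifs <;> simp [peaks_eq_pk]

lemma join_main (w a r : List Bool) (hw0 : height w = 0) (hwp : Npos w)
    (ha0 : height a = 0) (han : Nneg a) (hr0 : height r = 0) :
    height (w ++ true :: (a ++ false :: r)) = 0
    ∧ (w ++ true :: (a ++ false :: r)).count true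
        = w.count true + (1 + a.count true + r.count true)
    ∧ flaws (w ++ true :: (a ++ false :: r)) = w.count true + flaws r
    ∧ peaks (w ++ true :: (a ++ false :: r)) = peaks w + (apk a + peaks r) := by
  obtain ⟨j1, j2, j3, j4, j5⟩ := join_stats w a r hw0 hwp ha0 han hr0
  refine ⟨j1, by rw [j2]; ring, ?_, ?_⟩
  · rw [flaws_eq_fl, j3, ← flaws_eq_fl]
  · rw [peaks_eq_pk, j4, apk_eq_pk_form]
    simp only [← peaks_eq_pk]

theorem main_count (n m k : ℕ) (hmn : m ≠ n) :
    p n m k = ∑ q ∈ Finset.HasAntidiagonal.antidiagonal k, ∑ t ∈ Finset.HasAntidiagonal.antidiagonal m,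
      ∑ u ∈ Finset.HasAntidiagonal.antidiagonal n,
      (if t.1 = u.1 then v u.1 0 q.1 else 0) *
      (if u.2 = 0 then 0 else
        ∑ q2 ∈ Finset.HasAntidiagonal.antidiagonal q.2, ∑ t2 ∈ Finset.HasAntidiagonal.antidiagonal t.2,
          ∑ u2 ∈ Finset.HasAntidiagonal.antidiagonal (u.2 - 1),
          (if t2.1 = 0 then archCount u2.1 q2.1 else 0) * p u2.2 t2.2 q2.2) := by
  classical
  haveI hSfin : Finite {l : List Bool // IsDyck n l ∧ flaws l = m ∧ peaks l = k} :=
    finite_S n m k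
  -- the join map
  set g : {x : ({w : List Bool // height w = 0 ∧ Npos w}) ×
        (({a : List Bool // height a = 0 ∧ Nneg a}) × ({r : List Bool // height r = 0})) //
        peaks x.1.1 + (apk x.2.1.1 + peaks x.2.2.1) = k
        ∧ x.1.1.count true + flaws x.2.2.1 = m
        ∧ x.1.1.count true + (1 + x.2.1.1.count true + x.2.2.1.count true) = n} →
      {l : List Bool // IsDyck n l ∧ flaws l = m ∧ peaks l = k} :=
    fun x => ⟨x.1.1.1 ++ true :: (x.1.2.1.1 ++ false :: x.1.2.2.1), by
      obtain ⟨⟨⟨w, hw0, hwp⟩, ⟨a, ha0, han⟩, ⟨r, hr0⟩⟩, hc1, hc2, hc3⟩ := x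
      obtain ⟨j1, j2, j3, j4⟩ := join_main w a r hw0 hwp ha0 han hr0
      simp only at hc1 hc2 hc3 ⊢
      refine ⟨(isDyck_iff _ _).mpr ⟨j1, by rw [j2]; exact hc3⟩, by rw [j3]; exact hc2,
        by rw [j4]; exact hc1⟩⟩ with hgdef
  have hg : Function.Bijective g := by
    constructor
    · rintro ⟨⟨⟨w, hw0, hwp⟩, ⟨a, ha0, han⟩, ⟨r, hr0⟩⟩, hx⟩
        ⟨⟨⟨w', hw0', hwp'⟩, ⟨a', ha0', han'⟩, ⟨r', hr0'⟩⟩, hy⟩ hxy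
      have h := congrArg Subtype.val hxy
      simp only [hgdef] at h
      obtain ⟨e1, e2, e3⟩ := decomp_unique hw0 hwp ha0 han hw0' hwp' ha0' han' h
      subst e1; subst e2; subst e3
      rfl
    · rintro ⟨l, hd, hf, hp⟩
      have h0 : height l = 0 := ((isDyck_iff n l).mp hd).1
      have hct : l.count true = n := ((isDyck_iff n l).mp hd).2
      have hnp : ¬ Npos l := by
        intro hnpos
        apply hmn
        rw [← hf, flaws_eq_fl, (npos_iff l).mpr hnpos, hct]
      obtain ⟨w, a, r, ⟨hw0, hwp, ha0, han, hr0⟩, heq⟩ := decomp_exists h0 hnp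
      obtain ⟨j1, j2, j3, j4⟩ := join_main w a r hw0 hwp ha0 han hr0
      rw [heq] at hct hf hp
      refine ⟨⟨(⟨w, hw0, hwp⟩, ⟨a, ha0, han⟩, ⟨r, hr0⟩), ?_, ?_, ?_⟩, ?_⟩
      · simp only
        rw [← j4]; exact hp
      · simp only
        rw [← j3]; exact hf
      · simp only
        rw [← j2]; exact hct
      · apply Subtype.ext
        simp only [hgdef]
        exact heq.symm
  haveI hTTfin : Finite {x : ({w : List Bool // height w = 0 ∧ Npos w}) ×
        (({a : List Bool // height a = 0 ∧ Nneg a}) × ({r : List Bool // height r = 0})) //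
        peaks x.1.1 + (apk x.2.1.1 + peaks x.2.2.1) = k
        ∧ x.1.1.count true + flaws x.2.2.1 = m
        ∧ x.1.1.count true + (1 + x.2.1.1.count true + x.2.2.1.count true) = n} :=
    Finite.of_injective g hg.1
  have hcards : p n m k = Nat.card {x : ({w : List Bool // height w = 0 ∧ Npos w}) ×
        (({a : List Bool // height a = 0 ∧ Nneg a}) × ({r : List Bool // height r = 0})) //
        peaks x.1.1 + (apk x.2.1.1 + peaks x.2.2.1) = k
        ∧ x.1.1.count true + flaws x.2.2.1 = m
        ∧ x.1.1.count true + (1 + x.2.1.1.count true + x.2.2.1.count true) = n} := by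
    unfold p
    exact (Nat.card_congr (Equiv.ofBijective g hg)).symm
  rw [hcards]
  have hmain := card_two_stats
    (fun w : {w : List Bool // height w = 0 ∧ Npos w} => peaks w.1)
    (fun w : {w : List Bool // height w = 0 ∧ Npos w} => w.1.count true)
    (fun w : {w : List Bool // height w = 0 ∧ Npos w} => w.1.count true)
    (fun y : ({a : List Bool // height a = 0 ∧ Nneg a}) × ({r : List Bool // height r = 0})
      => apk y.1.1 + peaks y.2.1)
    (fun y : ({a : List Bool // height a = 0 ∧ Nneg a}) × ({r : List Bool // height r = 0})
      => flaws y.2.1)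
    (fun y : ({a : List Bool // height a = 0 ∧ Nneg a}) × ({r : List Bool // height r = 0})
      => 1 + y.1.1.count true + y.2.1.count true)
    k m n hTTfin
  rw [hmain]
  apply Finset.sum_congr rfl
  intro q hq
  apply Finset.sum_congr rfl
  intro t ht
  apply Finset.sum_congr rfl
  intro u hu
  congr 1
  -- the W factor
  · rw [card_flatten (fun w : List Bool => height w = 0 ∧ Npos w)
      (fun w : List Bool => peaks w = q.1 ∧ w.count true = t.1 ∧ w.count true = u.1)]
    split_ifs with htu
    · rw [← p_reflect u.1 q.1]
      unfold p
      apply card_subtype_iff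
      intro w
      constructor
      · rintro ⟨⟨h0, hnp⟩, hpk, -, hc2⟩
        refine ⟨(isDyck_iff _ _).mpr ⟨h0, hc2⟩, ?_, hpk⟩
        rw [flaws_eq_fl, ← hc2, npos_iff]
        exact hnp
      · rintro ⟨hd, hfl, hpk⟩
        rw [isDyck_iff] at hd
        rw [flaws_eq_fl] at hfl
        refine ⟨⟨hd.1, ?_⟩, hpk, by omega, hd.2⟩
        rw [← npos_iff, hfl, hd.2]
    · apply card_subtype_empty
      rintro w ⟨-, -, h1, h2⟩
      exact htu (by omega)
  -- the (arch, rest) factor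
  · split_ifs with hN
    · apply card_subtype_empty
      rintro y ⟨-, -, h3⟩
      omega
    · haveI hfin2 : Finite {y : ({a : List Bool // height a = 0 ∧ Nneg a}) ×
          ({r : List Bool // height r = 0}) //
          apk y.1.1 + peaks y.2.1 = q.2 ∧ 0 + flaws y.2.1 = t.2
          ∧ y.1.1.count true + y.2.1.count true = u.2 - 1} := by
        haveI hfb : Finite {l : List Bool // l.length ≤ 2 * u.2} :=
          finite_of_len_le (2 * u.2) _ (fun _ h => h)
        apply Finite.of_injective (fun x : {y : ({a : List Bool // height a = 0 ∧ Nneg a}) ×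
            ({r : List Bool // height r = 0}) //
            apk y.1.1 + peaks y.2.1 = q.2 ∧ 0 + flaws y.2.1 = t.2
            ∧ y.1.1.count true + y.2.1.count true = u.2 - 1} =>
          ((⟨x.1.1.1, by
              obtain ⟨⟨⟨a, ha0, -⟩, ⟨r, hr0⟩⟩, -, -, h3⟩ := x
              simp only at h3 ⊢
              have hla := length_eq_counts a
              rw [height_eq_zero_iff] at ha0
              omega⟩ : {l : List Bool // l.length ≤ 2 * u.2}),
           (⟨x.1.2.1, by
              obtain ⟨⟨⟨a, ha0, -⟩, ⟨r, hr0⟩⟩, -, -, h3⟩ := x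
              simp only at h3 ⊢
              have hlr := length_eq_counts r
              rw [height_eq_zero_iff] at hr0
              omega⟩ : {l : List Bool // l.length ≤ 2 * u.2})))
        rintro ⟨⟨⟨a, pa⟩, ⟨r, pr⟩⟩, hx⟩ ⟨⟨⟨a', pa'⟩, ⟨r', pr'⟩⟩, hy⟩ hxy
        simp only [Prod.mk.injEq, Subtype.mk.injEq] at hxy
        obtain ⟨e1, e2⟩ := hxy
        subst e1; subst e2
        rfl
      rw [card_subtype_iff (Q := fun y : ({a : List Bool // height a = 0 ∧ Nneg a}) ×
          ({r : List Bool // height r = 0}) =>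
          apk y.1.1 + peaks y.2.1 = q.2 ∧ 0 + flaws y.2.1 = t.2
          ∧ y.1.1.count true + y.2.1.count true = u.2 - 1)
        (fun y => by constructor <;> rintro ⟨h1, h2, h3⟩ <;> exact ⟨h1, by omega, by omega⟩)]
      have hinner := card_two_stats
        (fun a : {a : List Bool // height a = 0 ∧ Nneg a} => apk a.1)
        (fun _ : {a : List Bool // height a = 0 ∧ Nneg a} => 0)
        (fun a : {a : List Bool // height a = 0 ∧ Nneg a} => a.1.count true)
        (fun r : {r : List Bool // height r = 0} => peaks r.1)
        (fun r : {r : List Bool // height r = 0} => flaws r.1)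
        (fun r : {r : List Bool // height r = 0} => r.1.count true)
        q.2 t.2 (u.2 - 1) hfin2
      rw [hinner]
      apply Finset.sum_congr rfl
      intro q2 hq2
      apply Finset.sum_congr rfl
      intro t2 ht2
      apply Finset.sum_congr rfl
      intro u2 hu2
      congr 1
      -- arch factor
      · rw [card_flatten (fun a : List Bool => height a = 0 ∧ Nneg a)
          (fun a : List Bool => apk a = q2.1 ∧ 0 = t2.1 ∧ a.count true = u2.1)]
        split_ifs with ht20
        · rw [← card_arch u2.1 q2.1]
          apply card_subtype_iff
          intro a
          constructor
          · rintro ⟨hb, h1, -, h3⟩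
            exact ⟨hb, h1, h3⟩
          · rintro ⟨hb, h1, h3⟩
            exact ⟨hb, h1, ht20.symm, h3⟩
        · apply card_subtype_empty
          rintro a ⟨-, -, h2, -⟩
          exact ht20 h2.symm
      -- rest factor
      · rw [card_flatten (fun r : List Bool => height r = 0)
          (fun r : List Bool => peaks r = q2.2 ∧ flaws r = t2.2 ∧ r.count true = u2.2)]
        unfold p
        apply card_subtype_iff
        intro r
        constructor
        · rintro ⟨h0, h1, h2, h3⟩
          exact ⟨(isDyck_iff _ _).mpr ⟨h0, h3⟩, h2, h1⟩
        · rintro ⟨hd, hfl, hpk⟩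
          rw [isDyck_iff] at hd
          exact ⟨hd.1, hpk, hfl, hd.2⟩

end C7

section C8

open MvPowerSeries

noncomputable def d3 (k m n : ℕ) : Fin 3 →₀ ℕ :=
  Finsupp.single 0 k + Finsupp.single 1 m + Finsupp.single 2 n

lemma d3_apply (k m n : ℕ) :
    d3 k m n 0 = k ∧ d3 k m n 1 = m ∧ d3 k m n 2 = n := by
  refine ⟨?_, ?_, ?_⟩ <;>
    simp [d3, Finsupp.single_apply, Finsupp.add_apply,
      show (0 : Fin 3) ≠ 1 by decide, show (0 : Fin 3) ≠ 2 by decide,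
      show (1 : Fin 3) ≠ 0 by decide, show (1 : Fin 3) ≠ 2 by decide,
      show (2 : Fin 3) ≠ 0 by decide, show (2 : Fin 3) ≠ 1 by decide]

lemma eq_d3 (x : Fin 3 →₀ ℕ) : x = d3 (x 0) (x 1) (x 2) := by
  ext i
  obtain ⟨h0, h1, h2⟩ := d3_apply (x 0) (x 1) (x 2)
  fin_cases i
  · exact h0.symm
  · exact h1.symm
  · exact h2.symm

lemma d3_add (k m n k' m' n' : ℕ) :
    d3 k m n + d3 k' m' n' = d3 (k + k') (m + m') (n + n') := by
  unfold d3
  rw [Finsupp.single_add 0 k k', Finsupp.single_add 1 m m', Finsupp.single_add 2 n n']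
  abel

lemma d3_inj {k m n k' m' n' : ℕ} (h : d3 k m n = d3 k' m' n') :
    k = k' ∧ m = m' ∧ n = n' := by
  obtain ⟨a0, a1, a2⟩ := d3_apply k m n
  obtain ⟨b0, b1, b2⟩ := d3_apply k' m' n'
  exact ⟨by rw [← a0, h, b0], by rw [← a1, h, b1], by rw [← a2, h, b2]⟩

lemma coeff3_eq (F : MvPowerSeries (Fin 3) ℤ) (k m n : ℕ) :
    coeff3 F k m n = MvPowerSeries.coeff (d3 k m n) F := rfl

lemma coeff3_add (F G : MvPowerSeries (Fin 3) ℤ) (k m n : ℕ) :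
    coeff3 (F + G) k m n = coeff3 F k m n + coeff3 G k m n := by
  simp [coeff3_eq]

lemma coeff3_sub (F G : MvPowerSeries (Fin 3) ℤ) (k m n : ℕ) :
    coeff3 (F - G) k m n = coeff3 F k m n - coeff3 G k m n := by
  simp [coeff3_eq]

lemma coeff3_mul (F G : MvPowerSeries (Fin 3) ℤ) (k m n : ℕ) :
    coeff3 (F * G) k m n = ∑ q ∈ Finset.HasAntidiagonal.antidiagonal k, ∑ t ∈ Finset.HasAntidiagonal.antidiagonal m,
      ∑ u ∈ Finset.HasAntidiagonal.antidiagonal n,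
      coeff3 F q.1 t.1 u.1 * coeff3 G q.2 t.2 u.2 := by
  classical
  rw [coeff3_eq, MvPowerSeries.coeff_mul]
  have hr : (∑ q ∈ Finset.HasAntidiagonal.antidiagonal k, ∑ t ∈ Finset.HasAntidiagonal.antidiagonal m,
      ∑ u ∈ Finset.HasAntidiagonal.antidiagonal n, coeff3 F q.1 t.1 u.1 * coeff3 G q.2 t.2 u.2)
      = ∑ y ∈ (Finset.HasAntidiagonal.antidiagonal k ×ˢ (Finset.HasAntidiagonal.antidiagonal m ×ˢ Finset.HasAntidiagonal.antidiagonal n)),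
        coeff3 F y.1.1 y.2.1.1 y.2.2.1 * coeff3 G y.1.2 y.2.1.2 y.2.2.2 := by
    rw [Finset.sum_product]
    apply Finset.sum_congr rfl
    intro q hq
    rw [Finset.sum_product]
  rw [hr]
  apply Finset.sum_nbij'
    (i := fun d : (Fin 3 →₀ ℕ) × (Fin 3 →₀ ℕ) =>
      ((d.1 0, d.2 0), ((d.1 1, d.2 1), (d.1 2, d.2 2))))
    (j := fun y : (ℕ × ℕ) × ((ℕ × ℕ) × (ℕ × ℕ)) =>
      (d3 y.1.1 y.2.1.1 y.2.2.1, d3 y.1.2 y.2.1.2 y.2.2.2))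
  · intro d hd
    rw [Finset.HasAntidiagonal.mem_antidiagonal] at hd
    obtain ⟨a0, a1, a2⟩ := d3_apply k m n
    simp only [Finset.mem_product, Finset.HasAntidiagonal.mem_antidiagonal]
    refine ⟨?_, ⟨?_, ?_⟩⟩
    · rw [← a0, ← hd]; simp [Finsupp.add_apply]
    · rw [← a1, ← hd]; simp [Finsupp.add_apply]
    · rw [← a2, ← hd]; simp [Finsupp.add_apply]
  · intro y hy
    simp only [Finset.mem_product, Finset.HasAntidiagonal.mem_antidiagonal] at hy
    rw [Finset.HasAntidiagonal.mem_antidiagonal]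
    rw [d3_add, hy.1, hy.2.1, hy.2.2]
  · intro d hd
    simp only
    rw [← eq_d3 d.1, ← eq_d3 d.2]
  · intro y hy
    obtain ⟨a0, a1, a2⟩ := d3_apply y.1.1 y.2.1.1 y.2.2.1
    obtain ⟨b0, b1, b2⟩ := d3_apply y.1.2 y.2.1.2 y.2.2.2
    simp only [a0, a1, a2, b0, b1, b2]
  · intro d hd
    simp only
    rw [coeff3_eq, coeff3_eq, ← eq_d3 d.1, ← eq_d3 d.2]

lemma d3_zero : d3 0 0 0 = 0 := by simp [d3]

lemma single21 : Finsupp.single (2 : Fin 3) 1 = d3 0 0 1 := by simp [d3]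
lemma single01 : Finsupp.single (0 : Fin 3) 1 = d3 1 0 0 := by simp [d3]

lemma coeff3_one (k m n : ℕ) :
    coeff3 1 k m n = if k = 0 ∧ m = 0 ∧ n = 0 then 1 else 0 := by
  classical
  rw [coeff3_eq, MvPowerSeries.coeff_one]
  by_cases h : k = 0 ∧ m = 0 ∧ n = 0
  · obtain ⟨rfl, rfl, rfl⟩ := h
    rw [if_pos d3_zero, if_pos ⟨rfl, rfl, rfl⟩]
  · rw [if_neg h, if_neg]
    intro hc
    rw [← d3_zero] at hc
    exact h (d3_inj hc)

lemma coeff3_X0 (k m n : ℕ) :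
    coeff3 (MvPowerSeries.X 0) k m n = if k = 1 ∧ m = 0 ∧ n = 0 then 1 else 0 := by
  classical
  rw [coeff3_eq, MvPowerSeries.X_def, MvPowerSeries.coeff_monomial, single01]
  by_cases h : k = 1 ∧ m = 0 ∧ n = 0
  · obtain ⟨rfl, rfl, rfl⟩ := h
    rw [if_pos rfl, if_pos ⟨rfl, rfl, rfl⟩]
  · rw [if_neg h, if_neg]
    intro hc
    exact h (d3_inj hc)

lemma coeff3_X2_mul (H : MvPowerSeries (Fin 3) ℤ) (k m n : ℕ) :
    coeff3 (MvPowerSeries.X 2 * H) k m n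
      = if n = 0 then 0 else coeff3 H k m (n - 1) := by
  classical
  split_ifs with hn
  · subst hn
    rw [coeff3_eq, MvPowerSeries.coeff_mul]
    apply Finset.sum_eq_zero
    intro d hd
    rw [Finset.HasAntidiagonal.mem_antidiagonal] at hd
    have hd1 : MvPowerSeries.coeff (R := ℤ) d.1 (MvPowerSeries.X (2 : Fin 3)) = 0 := by
      rw [MvPowerSeries.X_def, MvPowerSeries.coeff_monomial, if_neg]
      intro hc
      have h2 : d.1 2 + d.2 2 = 0 := by
        have := congrArg (fun f : Fin 3 →₀ ℕ => f 2) hd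
        simpa [Finsupp.add_apply, (d3_apply k m 0).2.2] using this
      have := congrArg (fun f : Fin 3 →₀ ℕ => f 2) hc
      simp [Finsupp.single_apply] at this
      omega
    rw [hd1, zero_mul]
  · have hsplit : d3 k m n = Finsupp.single (2 : Fin 3) 1 + d3 k m (n - 1) := by
      rw [single21, d3_add, Nat.zero_add, Nat.zero_add, Nat.add_comm 1 (n - 1),
        Nat.sub_add_cancel (by omega)]
    rw [coeff3_eq, hsplit, MvPowerSeries.X_def, MvPowerSeries.coeff_add_monomial_mul,
      one_mul, ← coeff3_eq]

lemma coeff3_arch (P0 : MvPowerSeries (Fin 3) ℤ)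
    (hP0 : ∀ n m k : ℕ, coeff3 P0 k m n = if m = 0 then (p n 0 k : ℤ) else 0)
    (a b c : ℕ) :
    coeff3 (MvPowerSeries.X 0 + P0 - 1) a b c
      = if b = 0 then (archCount c a : ℤ) else 0 := by
  rw [coeff3_sub, coeff3_add, coeff3_X0, hP0 c b a, coeff3_one]
  unfold archCount
  by_cases hb : b = 0
  · subst hb
    by_cases hc : c = 0
    · subst hc
      rw [p_zero_zero]
      split_ifs <;> omega
    · split_ifs <;> omega
  · split_ifs <;> omega

end C8

section C9

open MvPowerSeries

theorem master (P P0 W : MvPowerSeries (Fin 3) ℤ)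
    (hP : ∀ n m k : ℕ, coeff3 P k m n = p n m k)
    (hP0 : ∀ n m k : ℕ, coeff3 P0 k m n = if m = 0 then (p n 0 k : ℤ) else 0)
    (hW : ∀ n m k : ℕ, coeff3 W k m n = if m = n then (v n 0 k : ℤ) else 0) :
    P = W * (1 + MvPowerSeries.X 2 * (MvPowerSeries.X 0 + P0 - 1) * P) := by
  apply MvPowerSeries.ext
  intro d
  rw [eq_d3 d]
  rw [← coeff3_eq P (d 0) (d 1) (d 2), ← coeff3_eq _ (d 0) (d 1) (d 2)]
  set k := d 0 with hk
  set m := d 1 with hm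
  set n := d 2 with hn
  clear_value k m n
  clear hk hm hn
  have hsplit : W * (1 + MvPowerSeries.X 2 * (MvPowerSeries.X 0 + P0 - 1) * P)
      = W + W * (MvPowerSeries.X 2 * ((MvPowerSeries.X 0 + P0 - 1) * P)) := by
    ring
  rw [hP n m k, hsplit, coeff3_add, coeff3_mul, hW n m k]
  -- compute the coefficient of the second factor
  have hG : ∀ K M N : ℕ,
      coeff3 (MvPowerSeries.X 2 * ((MvPowerSeries.X 0 + P0 - 1) * P)) K M N
      = if N = 0 then 0 else
          ∑ q2 ∈ Finset.HasAntidiagonal.antidiagonal K, ∑ t2 ∈ Finset.HasAntidiagonal.antidiagonal M,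
            ∑ u2 ∈ Finset.HasAntidiagonal.antidiagonal (N - 1),
            (if t2.1 = 0 then (archCount u2.1 q2.1 : ℤ) else 0)
              * (p u2.2 t2.2 q2.2 : ℤ) := by
    intro K M N
    rw [coeff3_X2_mul]
    split_ifs with hN
    · rfl
    · rw [coeff3_mul]
      apply Finset.sum_congr rfl
      intro q2 _
      apply Finset.sum_congr rfl
      intro t2 _
      apply Finset.sum_congr rfl
      intro u2 _
      rw [coeff3_arch P0 hP0, hP u2.2 t2.2 q2.2]
  have hsum : (∑ q ∈ Finset.HasAntidiagonal.antidiagonal k, ∑ t ∈ Finset.HasAntidiagonal.antidiagonal m,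
      ∑ u ∈ Finset.HasAntidiagonal.antidiagonal n, coeff3 W q.1 t.1 u.1 *
        coeff3 (MvPowerSeries.X 2 * ((MvPowerSeries.X 0 + P0 - 1) * P)) q.2 t.2 u.2)
      = ∑ q ∈ Finset.HasAntidiagonal.antidiagonal k, ∑ t ∈ Finset.HasAntidiagonal.antidiagonal m,
          ∑ u ∈ Finset.HasAntidiagonal.antidiagonal n,
          (if t.1 = u.1 then (v u.1 0 q.1 : ℤ) else 0) *
          (if u.2 = 0 then 0 else
            ∑ q2 ∈ Finset.HasAntidiagonal.antidiagonal q.2, ∑ t2 ∈ Finset.HasAntidiagonal.antidiagonal t.2,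
              ∑ u2 ∈ Finset.HasAntidiagonal.antidiagonal (u.2 - 1),
              (if t2.1 = 0 then (archCount u2.1 q2.1 : ℤ) else 0)
                * (p u2.2 t2.2 q2.2 : ℤ)) := by
    apply Finset.sum_congr rfl
    intro q _
    apply Finset.sum_congr rfl
    intro t _
    apply Finset.sum_congr rfl
    intro u _
    rw [hW u.1 t.1 q.1, hG q.2 t.2 u.2]
  rw [hsum]
  clear hsum hG hsplit
  by_cases hmn : m = n
  · subst hmn
    rw [if_pos rfl]
    have hzero : (∑ q ∈ Finset.HasAntidiagonal.antidiagonal k, ∑ t ∈ Finset.HasAntidiagonal.antidiagonal m,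
        ∑ u ∈ Finset.HasAntidiagonal.antidiagonal m,
        (if t.1 = u.1 then (v u.1 0 q.1 : ℤ) else 0) *
        (if u.2 = 0 then 0 else
          ∑ q2 ∈ Finset.HasAntidiagonal.antidiagonal q.2, ∑ t2 ∈ Finset.HasAntidiagonal.antidiagonal t.2,
            ∑ u2 ∈ Finset.HasAntidiagonal.antidiagonal (u.2 - 1),
            (if t2.1 = 0 then (archCount u2.1 q2.1 : ℤ) else 0)
              * (p u2.2 t2.2 q2.2 : ℤ))) = 0 := by
      apply Finset.sum_eq_zero
      intro q _
      apply Finset.sum_eq_zero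
      intro t ht
      apply Finset.sum_eq_zero
      intro u hu
      rw [Finset.HasAntidiagonal.mem_antidiagonal] at ht hu
      by_cases htu : t.1 = u.1
      · rw [if_pos htu]
        by_cases hu2 : u.2 = 0
        · rw [if_pos hu2, mul_zero]
        · rw [if_neg hu2]
          have hin : (∑ q2 ∈ Finset.HasAntidiagonal.antidiagonal q.2, ∑ t2 ∈ Finset.HasAntidiagonal.antidiagonal t.2,
              ∑ u2 ∈ Finset.HasAntidiagonal.antidiagonal (u.2 - 1),
              (if t2.1 = 0 then (archCount u2.1 q2.1 : ℤ) else 0)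
                * (p u2.2 t2.2 q2.2 : ℤ)) = 0 := by
            apply Finset.sum_eq_zero
            intro q2 _
            apply Finset.sum_eq_zero
            intro t2 ht2
            apply Finset.sum_eq_zero
            intro u2 hu2'
            rw [Finset.HasAntidiagonal.mem_antidiagonal] at ht2 hu2'
            by_cases ht20 : t2.1 = 0
            · rw [if_pos ht20]
              rw [p_le_zero (show u2.2 < t2.2 by omega)]
              simp
            · rw [if_neg ht20, zero_mul]
          rw [hin, mul_zero]
      · rw [if_neg htu, zero_mul]
    rw [hzero, add_zero, p_reflect]
  · rw [if_neg hmn, zero_add]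
    have hcast := congrArg (fun x : ℕ => (x : ℤ)) (main_count n m k hmn)
    push_cast at hcast
    exact hcast

end C9

end PMS

/-- `P(x,y,z) = V_0(x,yz) (1 + z (x + P_0(x,z) - 1) P(x,y,z))`, where `P` is the
three-variable generating function of `p_{n,m,k}`, `P0` represents `P_0(x,z)` and
`W` represents `V_0(x,yz)`. -/
theorem peak_master_series (P P0 W : MvPowerSeries (Fin 3) ℤ)
    (hP : ∀ n m k : ℕ, coeff3 P k m n = p n m k)
    (hP0 : ∀ n m k : ℕ, coeff3 P0 k m n = if m = 0 then (p n 0 k : ℤ) else 0)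
    (hW : ∀ n m k : ℕ, coeff3 W k m n = if m = n then (v n 0 k : ℤ) else 0) :
    P = W * (1 + MvPowerSeries.X 2 * (MvPowerSeries.X 0 + P0 - 1) * P) :=
  PMS.master P P0 W hP hP0 hW
end

section
/- For n ≥ 0 and 0 ≤ m ≤ n, let P_{n,m}(x) = Σ_{k≥0} p_{n,m,k} x^k ∈ ℤ[x], so P_{0,0}(x) = 1. Then for every m ≥ 0 and every r ≥ 1: P_{m+r,m}(x) = x · Σ_{i=0}^{m} Σ_{j=0}^{r−1} P_{m−i,m−i}(x) · P_{r−1−j,r−1−j}(x) · P_{i+j,i}(x). -/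
/-- `P_{n,m}(x) = Σ_k p_{n,m,k} x^k` (all peak counts are `≤ n < 2n+1`, so the finite sum
captures every nonzero term). -/
noncomputable def Ppoly (n m : ℕ) : Polynomial ℤ :=
  ∑ k ∈ Finset.range (2 * n + 1), Polynomial.C (p n m k : ℤ) * Polynomial.X ^ k


namespace DPR


def stp (a : Bool) : ℤ := if a then 1 else -1

def flR (h : ℤ) : List Bool → ℕ
  | [] => 0
  | a :: t => (if a = true ∧ h < 0 then 1 else 0) + flR (h + stp a) t

def pkR : List Bool → ℕ
  | a :: b :: t => (if a = true ∧ b = false then 1 else 0) + pkR (b :: t)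
  | _ => 0

def vlR : List Bool → ℕ
  | a :: b :: t => (if a = false ∧ b = true then 1 else 0) + vlR (b :: t)
  | _ => 0


lemma height_nil : height [] = 0 := by simp [height]

lemma height_cons (a : Bool) (t : List Bool) : height (a :: t) = stp a + height t := by
  cases a <;> simp [height, stp, List.count_cons] <;> ring

lemma height_append (u v : List Bool) : height (u ++ v) = height u + height v := by
  simp [height, List.count_append]; ring

lemma count_tf (l : List Bool) : l.count true + l.count false = l.length := by
  induction l with
  | nil => simp
  | cons a t ih => cases a <;> simp [List.count_cons] <;> omega

lemma height_map_not (l : List Bool) : height (l.map Bool.not) = - height l := by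
  induction l with
  | nil => simp [height]
  | cons a t ih => cases a <;> simp [height_cons, ih, stp] <;> ring

lemma height_take_append (u v : List Bool) (k : ℕ) :
    height ((u ++ v).take k) = height (u.take k) + height (v.take (k - u.length)) := by
  rw [List.take_append, height_append]

lemma height_take_succ (l : List Bool) (k : ℕ) (hk : k < l.length) :
    height (l.take (k+1)) = height (l.take k) + stp (l.getD k false) := by
  rw [List.take_succ, height_append, List.getD_eq_getElem l false hk]
  have : l[k]? = some l[k] := List.getElem?_eq_getElem hk
  rw [this]
  simp [height_cons, height_nil]

lemma height_take_le (l : List Bool) (k : ℕ) (hk : l.length ≤ k) :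
    l.take k = l := List.take_of_length_le hk

lemma flR_le_count (h : ℤ) (l : List Bool) : flR h l ≤ l.count true := by
  induction l generalizing h with
  | nil => simp [flR]
  | cons a t ih =>
      have := ih (h + stp a)
      cases a <;> simp [flR, List.count_cons]
      · exact this
      · split <;> omega

lemma flR_append (h : ℤ) (u v : List Bool) :
    flR h (u ++ v) = flR h u + flR (h + height u) v := by
  induction u generalizing h with
  | nil => simp [flR, height_nil]
  | cons a t ih =>
      simp only [List.cons_append, flR, List.append_eq, height_cons]
      rw [ih, show h + stp a + height t = h + (stp a + height t) from by ring, add_assoc]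





lemma pkR_cons (a : Bool) (v : List Bool) :
    pkR (a :: v) = pkR v + (if a = true ∧ v.head? = some false then 1 else 0) := by
  cases v with
  | nil => simp [pkR]
  | cons b t =>
      show (if a = true ∧ b = false then 1 else 0) + pkR (b :: t) = _
      cases a <;> cases b <;> simp [List.head?] <;> omega

lemma vlR_cons (a : Bool) (v : List Bool) :
    vlR (a :: v) = vlR v + (if a = false ∧ v.head? = some true then 1 else 0) := by
  cases v with
  | nil => simp [vlR]
  | cons b t =>
      show (if a = false ∧ b = true then 1 else 0) + vlR (b :: t) = _
      cases a <;> cases b <;> simp [List.head?] <;> omega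

lemma pkR_append (u v : List Bool) :
    pkR (u ++ v) = pkR u + pkR v
      + (if u.getLast? = some true ∧ v.head? = some false then 1 else 0) := by
  induction u with
  | nil => simp [pkR]
  | cons a t ih =>
      cases t with
      | nil =>
          simp only [List.nil_append, List.cons_append, pkR_cons a v]
          simp [pkR, List.getLast?]
      | cons b t' =>
          show (if a = true ∧ b = false then 1 else 0) + pkR ((b :: t') ++ v) = _
          rw [ih]
          have : (a :: b :: t').getLast? = (b :: t').getLast? := by
            simp [List.getLast?_cons_cons]
          rw [this]
          show _ = (if a = true ∧ b = false then 1 else 0) + pkR (b :: t') + _ + _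
          omega

lemma vlR_append (u v : List Bool) :
    vlR (u ++ v) = vlR u + vlR v
      + (if u.getLast? = some false ∧ v.head? = some true then 1 else 0) := by
  induction u with
  | nil => simp [vlR]
  | cons a t ih =>
      cases t with
      | nil =>
          simp only [List.nil_append, List.cons_append, vlR_cons a v]
          simp [vlR, List.getLast?]
      | cons b t' =>
          show (if a = false ∧ b = true then 1 else 0) + vlR ((b :: t') ++ v) = _
          rw [ih]
          have : (a :: b :: t').getLast? = (b :: t').getLast? := by
            simp [List.getLast?_cons_cons]
          rw [this]
          show _ = (if a = false ∧ b = true then 1 else 0) + vlR (b :: t') + _ + _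
          omega

lemma vlR_map_not (l : List Bool) : vlR (l.map Bool.not) = pkR l := by
  induction l with
  | nil => simp [vlR, pkR]
  | cons a t ih =>
      rw [List.map_cons, vlR_cons, pkR_cons, ih]
      cases t with
      | nil => simp
      | cons b t' => cases a <;> cases b <;> simp

lemma pkR_vlR (l : List Bool) :
    pkR l + (if l.head? = some false ∧ l.getLast? = some true then 1 else 0)
      = vlR l + (if l.head? = some true ∧ l.getLast? = some false then 1 else 0) := by
  induction l with
  | nil => simp [pkR, vlR]
  | cons a t ih =>
      cases t with
      | nil => cases a <;> simp [pkR, vlR, List.getLast?]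
      | cons b t' =>
          have hl : (a :: b :: t').getLast? = (b :: t').getLast? := by
            simp [List.getLast?_cons_cons]
          obtain ⟨c, hc⟩ : ∃ c, (b :: t').getLast? = some c := by
            cases h : (b :: t').getLast? with
            | none => simp at h
            | some c => exact ⟨c, rfl⟩
          show (if a = true ∧ b = false then 1 else 0) + pkR (b :: t') + _
              = (if a = false ∧ b = true then 1 else 0) + vlR (b :: t') + _
          rw [hc] at ih
          rw [hl, hc]
          simp only [List.head?] at *
          cases a <;> cases b <;> cases c <;> simp at * <;> omega

lemma pkR_le_length (l : List Bool) : pkR l ≤ l.length := by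
  induction l with
  | nil => simp [pkR]
  | cons a t ih =>
      rw [pkR_cons]
      have : (if a = true ∧ t.head? = some false then 1 else 0) ≤ 1 := by split <;> simp
      simp only [List.length_cons]
      omega







lemma flaws_eq_flR (l : List Bool) : flaws l = flR 0 l := by
  suffices h : ∀ (l : List Bool) (h0 : ℤ),
      ((Finset.range l.length).filter
        (fun i => l.getD i false = true ∧ h0 + height (l.take i) < 0)).card = flR h0 l by
    have := h l 0
    simpa [flaws] using this
  intro l
  induction l with
  | nil => intro h0; simp [flR]
  | cons a t ih =>
      intro h0
      rw [Finset.card_filter, List.length_cons, Finset.sum_range_succ']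
      simp only [List.getD_cons_succ, List.getD_cons_zero, List.take_succ_cons, List.take_zero]
      rw [← Finset.card_filter]
      have hrec : ∀ i, (a :: t).take (i+1) = a :: t.take i := fun i => rfl
      have : ∀ i, height (a :: t.take i) = stp a + height (t.take i) := fun i => height_cons _ _
      simp only [this]
      have : (Finset.filter (fun i => t.getD i false = true ∧ h0 + (stp a + height (t.take i)) < 0)
          (Finset.range t.length)).card = flR (h0 + stp a) t := by
        rw [← ih (h0 + stp a)]
        congr 1
        apply Finset.filter_congr
        intro i _
        constructor <;> (intro ⟨h1, h2⟩; exact ⟨h1, by omega⟩)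
      rw [this, flR]
      simp [height]
      omega

lemma peaks_eq_pkR (l : List Bool) : peaks l = pkR l := by
  induction l with
  | nil => simp [peaks, pkR]
  | cons a t ih =>
      cases t with
      | nil => simp [peaks, pkR]
      | cons b t' =>
          show peaks (a :: b :: t') = (if a = true ∧ b = false then 1 else 0) + pkR (b :: t')
          rw [← ih]
          unfold peaks
          rw [Finset.card_filter, Finset.card_filter]
          simp only [List.length_cons]
          have : t'.length + 1 + 1 - 1 = t'.length + 1 := by omega
          rw [this, Finset.sum_range_succ']
          simp only [List.getD_cons_succ, List.getD_cons_zero]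
          have : t'.length + 1 - 1 = t'.length := by omega
          rw [this]
          omega


-- prefix-height lemmas
lemma flR_eq_count_of_nonpos (h : ℤ) (l : List Bool)
    (hle : ∀ k, h + height (l.take k) ≤ 0) : flR h l = l.count true := by
  induction l generalizing h with
  | nil => simp [flR]
  | cons a t ih =>
      have h0 : h + height ((a :: t).take 0) ≤ 0 := hle 0
      simp [height] at h0
      have hrec : ∀ k, (h + stp a) + height (t.take k) ≤ 0 := by
        intro k
        have := hle (k + 1)
        rw [List.take_succ_cons, height_cons] at this
        omega
      cases a with
      | false => simp [flR, List.count_cons, ih _ hrec]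
      | true =>
          have h1 : h + stp true + height (t.take 0) ≤ 0 := hrec 0
          simp [height, stp] at h1
          have : h < 0 := by omega
          simp [flR, List.count_cons, ih _ hrec, this]
          omega

lemma flR_eq_zero_of_nonneg (h : ℤ) (l : List Bool)
    (hle : ∀ k, 0 ≤ h + height (l.take k)) : flR h l = 0 := by
  induction l generalizing h with
  | nil => simp [flR]
  | cons a t ih =>
      have h0 : 0 ≤ h + height ((a :: t).take 0) := hle 0
      simp [height] at h0
      have hrec : ∀ k, 0 ≤ (h + stp a) + height (t.take k) := by
        intro k
        have := hle (k + 1)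
        rw [List.take_succ_cons, height_cons] at this
        omega
      have : ¬ (h < 0) := by omega
      simp [flR, ih _ hrec, this]

lemma take_height_nonpos_of_all_flaws (l : List Bool) (hf : flR 0 l = l.count true) :
    ∀ k, height (l.take k) ≤ 0 := by
  suffices h : ∀ (l : List Bool) (h0 : ℤ), h0 ≤ 0 → flR h0 l = l.count true →
      ∀ k, h0 + height (l.take k) ≤ 0 by
    intro k; have := h l 0 le_rfl hf k; omega
  intro l
  induction l with
  | nil => intro h0 hh _ k; cases k <;> simp [height, hh]
  | cons a t ih =>
      intro h0 hh hf k
      have hle : flR (h0 + stp a) t ≤ t.count true := flR_le_count _ t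
      cases k with
      | zero => simp [height]; omega
      | succ k' =>
          rw [List.take_succ_cons, height_cons]
          cases a with
          | false =>
              simp [flR, List.count_cons] at hf
              have := ih (h0 + stp false) (by simp [stp]; omega) (by simp [stp] at *; omega) k'
              simp [stp] at *
              omega
          | true =>
              simp [flR, List.count_cons] at hf
              by_cases hneg : h0 < 0
              · simp [hneg] at hf
                have : h0 + stp true ≤ 0 := by simp [stp]; omega
                have := ih (h0 + stp true) this (by simp [stp] at *; omega) k'
                simp [stp] at *
                omega
              · simp [hneg] at hf
                omega



lemma climb (w : List Bool) (u t0 : ℕ) (hut : u ≤ t0) (hlen : t0 ≤ w.length)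
    (hu : height (w.take u) ≤ 0) (ht : 1 ≤ height (w.take t0)) :
    ∃ s, u ≤ s ∧ s < t0 ∧ w.getD s false = true ∧ height (w.take s) = 0 := by
  classical
  set V : Finset ℕ := (Finset.range (t0+1)).filter
    (fun v => u ≤ v ∧ 1 ≤ height (w.take v)) with hV
  have hne : V.Nonempty := by
    refine ⟨t0, ?_⟩
    simp only [hV, Finset.mem_filter, Finset.mem_range]
    exact ⟨by omega, hut, ht⟩
  set v0 := V.min' hne with hv0def
  have hv0 : v0 ∈ V := Finset.min'_mem _ _
  simp only [hV, Finset.mem_filter, Finset.mem_range] at hv0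
  obtain ⟨hv0r, huv0, hv0h⟩ := hv0
  have huv : u < v0 := by
    rcases lt_or_eq_of_le huv0 with h | h
    · exact h
    · exfalso; rw [← h] at hv0h; omega
  refine ⟨v0 - 1, by omega, by omega, ?_⟩
  have hs_le : height (w.take (v0 - 1)) ≤ 0 := by
    rcases eq_or_lt_of_le (show u ≤ v0 - 1 by omega) with h | h
    · rw [← h]; exact hu
    · by_contra hc
      push_neg at hc
      have : v0 - 1 ∈ V := by
        simp only [hV, Finset.mem_filter, Finset.mem_range]
        exact ⟨by omega, by omega, by omega⟩
      have := Finset.min'_le _ _ this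
      omega
  have hsl : v0 - 1 < w.length := by omega
  have hstep := height_take_succ w (v0 - 1) hsl
  have : v0 - 1 + 1 = v0 := by omega
  rw [this] at hstep
  cases hgd : w.getD (v0 - 1) false with
  | false => rw [hgd] at hstep; simp [stp] at hstep; omega
  | true =>
      rw [hgd] at hstep; simp [stp] at hstep
      exact ⟨rfl, by omega⟩

lemma decomp (w : List Bool) (hend : height w = 0)
    (hpos : ∃ u, 1 ≤ height (w.take u)) :
    ∃ A B C, w = A ++ true :: (B ++ false :: C)
      ∧ height A = 0 ∧ height B = 0 ∧ height C = 0
      ∧ (∀ k, 0 ≤ height (B.take k)) ∧ (∀ k, height (C.take k) ≤ 0) := by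
  classical
  obtain ⟨u, hu⟩ := hpos
  have hu' : u ≤ w.length := by
    by_contra h
    rw [List.take_of_length_le (by omega)] at hu
    omega
  set T : Finset ℕ := (Finset.range (w.length+1)).filter
    (fun v => 1 ≤ height (w.take v)) with hT
  have hne : T.Nonempty := by
    refine ⟨u, ?_⟩
    simp only [hT, Finset.mem_filter, Finset.mem_range]
    exact ⟨by omega, hu⟩
  set t0 := T.max' hne with ht0def
  have ht0 : t0 ∈ T := Finset.max'_mem _ _
  simp only [hT, Finset.mem_filter, Finset.mem_range] at ht0
  obtain ⟨ht0r, ht0h⟩ := ht0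
  have Hafter : ∀ v, t0 < v → height (w.take v) ≤ 0 := by
    intro v hv
    by_cases hvl : v ≤ w.length
    · by_contra hc
      push_neg at hc
      have : v ∈ T := by
        simp only [hT, Finset.mem_filter, Finset.mem_range]
        exact ⟨by omega, by omega⟩
      have := Finset.le_max' _ _ this
      omega
    · rw [List.take_of_length_le (by omega)]; omega
  have ht0len : t0 < w.length := by
    rcases lt_or_eq_of_le (show t0 ≤ w.length by omega) with h | h
    · exact h
    · exfalso
      rw [h, List.take_length] at ht0h
      omega
  have hstep := height_take_succ w t0 ht0len
  have hgdt0 : w.getD t0 false = false := by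
    cases hgd : w.getD t0 false with
    | false => rfl
    | true =>
        exfalso
        rw [hgd] at hstep; simp [stp] at hstep
        have := Hafter (t0+1) (by omega)
        omega
  rw [hgdt0] at hstep
  simp [stp] at hstep
  have ht0one : height (w.take t0) = 1 := by
    have := Hafter (t0+1) (by omega)
    omega
  -- now find s0
  set S : Finset ℕ := (Finset.range t0).filter
    (fun s => w.getD s false = true ∧ height (w.take s) = 0) with hS
  have hSne : S.Nonempty := by
    obtain ⟨s, hs1, hs2, hs3, hs4⟩ := climb w 0 t0 (by omega) (by omega) (by simp [height]) (by omega)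
    refine ⟨s, ?_⟩
    simp only [hS, Finset.mem_filter, Finset.mem_range]
    exact ⟨hs2, hs3, hs4⟩
  set s0 := S.max' hSne with hs0def
  have hs0 : s0 ∈ S := Finset.max'_mem _ _
  simp only [hS, Finset.mem_filter, Finset.mem_range] at hs0
  obtain ⟨hs0r, hs0t, hs0h⟩ := hs0
  have Hmid : ∀ v, s0 < v → v ≤ t0 → 1 ≤ height (w.take v) := by
    intro v h1 h2
    by_contra hc
    push_neg at hc
    obtain ⟨s, hsa, hsb, hsc, hsd⟩ := climb w v t0 h2 (by omega) (by omega) (by omega)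
    have : s ∈ S := by
      simp only [hS, Finset.mem_filter, Finset.mem_range]
      exact ⟨hsb, hsc, hsd⟩
    have := Finset.le_max' _ _ this
    omega
  -- define pieces
  set A := w.take s0 with hAdef
  set B := (w.drop (s0+1)).take (t0 - (s0+1)) with hBdef
  set C := w.drop (t0+1) with hCdef
  have hslen : s0 < w.length := by omega
  have hBlen : B.length = t0 - (s0+1) := by
    rw [hBdef, List.length_take, List.length_drop]
    omega
  have hrec : w = A ++ true :: (B ++ false :: C) := by
    have e1 : w = w.take s0 ++ w.drop s0 := (List.take_append_drop _ _).symm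
    have e2 : w.drop s0 = true :: w.drop (s0+1) := by
      rw [List.drop_eq_getElem_cons hslen]
      congr 1
      rw [← List.getD_eq_getElem w false hslen, hs0t]
    have e3 : w.drop (s0+1) = B ++ w.drop t0 := by
      rw [hBdef]
      conv_lhs => rw [← List.take_append_drop (t0 - (s0+1)) (w.drop (s0+1))]
      rw [List.drop_drop]
      congr 2
      omega
    have e4 : w.drop t0 = false :: C := by
      rw [List.drop_eq_getElem_cons ht0len]
      congr 1
      rw [← List.getD_eq_getElem w false ht0len, hgdt0]
    rw [e3, e4] at e2
    rw [e2] at e1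
    exact e1
  -- heights of prefixes of B
  have hP : w = (A ++ [true]) ++ (B ++ false :: C) := by
    rw [hrec]; simp
  have hPlen : (A ++ [true]).length = s0 + 1 := by
    simp [hAdef, List.length_take]
    omega
  have hPheight : height (A ++ [true]) = 1 := by
    rw [height_append]
    simp [hAdef, hs0h, height_cons, height_nil, stp]
    exact hs0h
  have hBpre' : ∀ k, k ≤ B.length → height (B.take k) = height (w.take (s0+1+k)) - 1 := by
    intro k hk
    have e1 : height (w.take (s0+1+k))
        = height ((A ++ [true]).take (s0+1+k))
          + height ((B ++ false :: C).take (s0+1+k - (A ++ [true]).length)) := by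
      conv_lhs => rw [hP]
      exact height_take_append _ _ _
    have e2 : (A ++ [true]).take (s0+1+k) = A ++ [true] :=
      List.take_of_length_le (by rw [hPlen]; omega)
    have e3 : s0+1+k - (A ++ [true]).length = k := by rw [hPlen]; omega
    have e4 : (B ++ false :: C).take k = B.take k := by
      rw [List.take_append]
      have h2 : k - B.length = 0 := by omega
      rw [h2]
      simp
    rw [e2, e3, e4, hPheight] at e1
    omega
  have hBpre : ∀ k, 0 ≤ height (B.take k) := by
    intro k
    rcases le_or_gt k B.length with hk | hk
    · rw [hBpre' k hk]
      have := Hmid (s0+1+k) (by omega) (by omega)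
      omega
    · rw [List.take_of_length_le (by omega)]
      have := hBpre' B.length le_rfl
      rw [List.take_length] at this
      rw [this]
      have := Hmid (s0+1+B.length) (by omega) (by omega)
      omega
  have hBh : height B = 0 := by
    have := hBpre' B.length le_rfl
    rw [List.take_length] at this
    rw [this]
    have h1 : s0 + 1 + B.length = t0 := by omega
    rw [h1, ht0one]
    norm_num
  have hAh : height A = 0 := hs0h
  -- heights of prefixes of C
  have hQ : w = w.take (t0+1) ++ C := by
    rw [hCdef, List.take_append_drop]
  have hQlen : (w.take (t0+1)).length = t0 + 1 := by
    rw [List.length_take]; omega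
  have hCpre : ∀ k, height (C.take k) ≤ 0 := by
    intro k
    have hkey : height (w.take (t0+1+k)) = height (w.take (t0+1)) + height (C.take k) := by
      conv_lhs => rw [hQ]
      rw [height_take_append, List.take_take, hQlen]
      have h1 : (t0+1+k) ⊓ (t0+1) = t0+1 := by omega
      have h2 : t0+1+k - (t0+1) = k := by omega
      rw [h1, h2]
    have h3 := Hafter (t0+1+k) (by omega)
    have h4 : height (w.take (t0+1)) = 0 := by omega
    omega
  have hCh : height C = 0 := by
    have := hrec
    rw [this] at hend
    rw [height_append, height_cons, height_append, height_cons] at hend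
    simp [stp] at hend
    omega
  exact ⟨A, B, C, hrec, hAh, hBh, hCh, hBpre, hCpre⟩



lemma Pt_of (A B C : List Bool) (hA : height A = 0) (hB : height B = 0)
    (hCp : ∀ k, height (C.take k) ≤ 0) :
    (A ++ true :: (B ++ false :: C)).getD (A.length + 1 + B.length) false = false
    ∧ height ((A ++ true :: (B ++ false :: C)).take (A.length + 1 + B.length)) = 1
    ∧ (∀ v, A.length + 1 + B.length < v →
        height ((A ++ true :: (B ++ false :: C)).take v) ≤ 0)
    ∧ C = (A ++ true :: (B ++ false :: C)).drop (A.length + 1 + B.length + 1) := by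
  set w := A ++ true :: (B ++ false :: C) with hw
  set t := A.length + 1 + B.length with htd
  have hsplit : w = (A ++ true :: B) ++ false :: C := by rw [hw]; simp
  have hprelen : (A ++ true :: B).length = t := by simp [htd]; omega
  have hpreh : height (A ++ true :: B) = 1 := by
    rw [height_append, height_cons, hA, hB]; simp [stp]
  refine ⟨?_, ?_, ?_, ?_⟩
  · rw [hsplit, List.getD_append_right _ _ _ _ (by omega), hprelen]
    simp
  · rw [hsplit, ← hprelen, List.take_left]
    exact hpreh
  · intro v hv
    have e1 : height (w.take v)
        = height ((A ++ true :: B).take v) + height ((false :: C).take (v - (A ++ true :: B).length)) := by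
      conv_lhs => rw [hsplit]
      exact height_take_append _ _ _
    have e2 : (A ++ true :: B).take v = A ++ true :: B :=
      List.take_of_length_le (by omega)
    obtain ⟨k, hk⟩ : ∃ k, v - (A ++ true :: B).length = k + 1 := by
      refine ⟨v - (A ++ true :: B).length - 1, ?_⟩
      omega
    rw [e2, hk, List.take_succ_cons, height_cons, hpreh] at e1
    have := hCp k
    simp [stp] at e1
    omega
  · have : w = ((A ++ true :: B) ++ [false]) ++ C := by rw [hsplit]; simp
    rw [this]
    have hlen2 : ((A ++ true :: B) ++ [false]).length = t + 1 := by
      simp [htd]; omega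
    rw [← hlen2, List.drop_left]

lemma Ps_of (A B C : List Bool) (hA : height A = 0)
    (hBp : ∀ k, 0 ≤ height (B.take k)) :
    (A ++ true :: (B ++ false :: C)).getD A.length false = true
    ∧ height ((A ++ true :: (B ++ false :: C)).take A.length) = 0
    ∧ (∀ v, A.length < v → v ≤ A.length + 1 + B.length →
        1 ≤ height ((A ++ true :: (B ++ false :: C)).take v))
    ∧ A = (A ++ true :: (B ++ false :: C)).take A.length
    ∧ B = ((A ++ true :: (B ++ false :: C)).take (A.length + 1 + B.length)).drop (A.length + 1) := by
  set w := A ++ true :: (B ++ false :: C) with hw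
  refine ⟨?_, ?_, ?_, ?_, ?_⟩
  · rw [hw, List.getD_append_right _ _ _ _ le_rfl]
    simp
  · rw [hw, List.take_left]
    exact hA
  · intro v hv1 hv2
    have e1 : height (w.take v)
        = height (A.take v) + height ((true :: (B ++ false :: C)).take (v - A.length)) := by
      conv_lhs => rw [hw]
      exact height_take_append _ _ _
    have e2 : A.take v = A := List.take_of_length_le (by omega)
    obtain ⟨k, hk⟩ : ∃ k, v - A.length = k + 1 := ⟨v - A.length - 1, by omega⟩
    have hkB : k ≤ B.length := by omega
    have e3 : (B ++ false :: C).take k = B.take k := by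
      rw [List.take_append]
      have : k - B.length = 0 := by omega
      rw [this]
      simp
    rw [e2, hk, List.take_succ_cons, height_cons, e3, hA] at e1
    have := hBp k
    simp [stp] at e1
    omega
  · rw [hw, List.take_left]
  · have hsplit : w = ((A ++ [true]) ++ B) ++ false :: C := by rw [hw]; simp
    have hlen1 : ((A ++ [true]) ++ B).length = A.length + 1 + B.length := by simp; omega
    have e1 : w.take (A.length + 1 + B.length) = (A ++ [true]) ++ B := by
      rw [hsplit, ← hlen1, List.take_left]
    rw [e1]
    have hlen2 : (A ++ [true]).length = A.length + 1 := by simp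
    rw [← hlen2, List.drop_left]

lemma decomp_unique (A B C A' B' C' : List Bool)
    (hA : height A = 0) (hB : height B = 0)
    (hBp : ∀ k, 0 ≤ height (B.take k)) (hCp : ∀ k, height (C.take k) ≤ 0)
    (hA' : height A' = 0) (hB' : height B' = 0)
    (hBp' : ∀ k, 0 ≤ height (B'.take k)) (hCp' : ∀ k, height (C'.take k) ≤ 0)
    (heq : A ++ true :: (B ++ false :: C) = A' ++ true :: (B' ++ false :: C')) :
    A = A' ∧ B = B' ∧ C = C' := by
  obtain ⟨pt1, pt2, pt3, pt4⟩ := Pt_of A B C hA hB hCp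
  obtain ⟨pt1', pt2', pt3', pt4'⟩ := Pt_of A' B' C' hA' hB' hCp'
  rw [← heq] at pt1' pt2' pt3' pt4'
  have htt : A.length + 1 + B.length = A'.length + 1 + B'.length := by
    rcases lt_trichotomy (A.length + 1 + B.length) (A'.length + 1 + B'.length) with h | h | h
    · have := pt3 _ h
      omega
    · exact h
    · have := pt3' _ h
      omega
  obtain ⟨ps1, ps2, ps3, ps4, ps5⟩ := Ps_of A B C hA hBp
  obtain ⟨ps1', ps2', ps3', ps4', ps5'⟩ := Ps_of A' B' C' hA' hBp'
  rw [← heq] at ps1' ps2' ps3' ps4' ps5'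
  have hss : A.length = A'.length := by
    rcases lt_trichotomy A.length A'.length with h | h | h
    · have := ps3 A'.length h (by omega)
      omega
    · exact h
    · have := ps3' A.length h (by omega)
      omega
  refine ⟨?_, ?_, ?_⟩
  · rw [ps4, ps4', hss]
  · rw [ps5, ps5', htt, hss]
  · rw [pt4, pt4', htt]



/-- all lists of booleans of length `L` -/
def allB : ℕ → Finset (List Bool)
  | 0 => {[]}
  | L+1 => (allB L).image (List.cons true) ∪ (allB L).image (List.cons false)

lemma mem_allB (L : ℕ) (l : List Bool) : l ∈ allB L ↔ l.length = L := by
  induction L generalizing l with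
  | zero =>
      cases l <;> simp [allB]
  | succ L ih =>
      cases l with
      | nil => simp [allB]
      | cons a t =>
          simp only [allB, Finset.mem_union, Finset.mem_image, List.length_cons]
          constructor
          · rintro (⟨u, hu, he⟩ | ⟨u, hu, he⟩) <;>
              (cases he; rw [ih] at hu; omega)
          · intro h
            have ht : t ∈ allB L := (ih t).2 (by omega)
            cases a
            · exact Or.inr ⟨t, ht, rfl⟩
            · exact Or.inl ⟨t, ht, rfl⟩

/-- Dyck paths of semilength n with m flaws, as a Finset -/
noncomputable def DF (n m : ℕ) : Finset (List Bool) :=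
  (allB (2*n)).filter (fun l => l.count true = n ∧ flR 0 l = m)

lemma mem_DF (n m : ℕ) (l : List Bool) :
    l ∈ DF n m ↔ l.length = 2*n ∧ l.count true = n ∧ flR 0 l = m := by
  simp [DF, mem_allB]

lemma p_eq_card (n m k : ℕ) :
    p n m k = ((DF n m).filter (fun l => pkR l = k)).card := by
  rw [p]
  have hset : {l : List Bool | IsDyck n l ∧ flaws l = m ∧ peaks l = k}
      = ↑((DF n m).filter (fun l => pkR l = k)) := by
    ext l
    simp only [Set.mem_setOf_eq, Finset.coe_filter, mem_DF, IsDyck,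
      flaws_eq_flR, peaks_eq_pkR, Set.mem_setOf_eq]
    tauto
  calc Nat.card {l : List Bool // IsDyck n l ∧ flaws l = m ∧ peaks l = k}
      = Nat.card {l : List Bool | IsDyck n l ∧ flaws l = m ∧ peaks l = k} := rfl
    _ = ((DF n m).filter (fun l => pkR l = k)).card := by
        rw [hset, Nat.card_coe_set_eq, Set.ncard_coe_finset]

lemma Ppoly_eq_sum (n m : ℕ) :
    Ppoly n m = ∑ w ∈ DF n m, Polynomial.X ^ (pkR w) := by
  classical
  rw [Ppoly]
  have hmap : ∀ w ∈ DF n m, pkR w ∈ Finset.range (2*n+1) := by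
    intro w hw
    rw [mem_DF] at hw
    have := pkR_le_length w
    rw [Finset.mem_range]
    omega
  rw [← Finset.sum_fiberwise_of_maps_to hmap (fun w => (Polynomial.X : Polynomial ℤ) ^ (pkR w))]
  apply Finset.sum_congr rfl
  intro k _
  rw [p_eq_card n m k]
  have hc : ∑ w ∈ (DF n m).filter (fun l => pkR l = k), (Polynomial.X:Polynomial ℤ) ^ (pkR w)
       = ∑ _w ∈ (DF n m).filter (fun l => pkR l = k), (Polynomial.X:Polynomial ℤ) ^ k := by
    apply Finset.sum_congr rfl
    intro w hw
    rw [Finset.mem_filter] at hw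
    rw [hw.2]
  rw [hc, Finset.sum_const, nsmul_eq_mul]
  norm_num



lemma count_not_true (l : List Bool) : (l.map Bool.not).count true = l.count false := by
  induction l with
  | nil => simp
  | cons a t ih => cases a <;> simp [List.count_cons, ih]

lemma map_not_not (l : List Bool) : (l.map Bool.not).map Bool.not = l := by
  induction l with
  | nil => simp
  | cons a t ih => simp [ih]

lemma pk_formula (A E C : List Bool) :
    pkR (A ++ true :: (E.map Bool.not ++ false :: C))
      = (pkR C + pkR E + pkR A) + 1 := by
  set X := E.map Bool.not with hX
  set u : List Bool := true :: (X ++ [false]) with hu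
  have e0 : (true :: (X ++ false :: C) : List Bool) = u ++ C := by simp [hu]
  rw [pkR_append, e0, pkR_append]
  have h1 : u.getLast? = some false := by
    rw [hu, show (true :: (X ++ [false]) : List Bool) = (true :: X) ++ [false] by simp]
    exact List.getLast?_concat
  have h2 : u.head? = some true := by rw [hu]; rfl
  have h3 : pkR u = vlR u + 1 := by
    have := pkR_vlR u
    rw [h1, h2] at this
    simp at this
    omega
  have h4 : vlR u = pkR E := by
    rw [hu, vlR_cons, vlR_append]
    simp [vlR, vlR_map_not E]
    exact vlR_map_not E
  rw [h3, h4]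
  have h1' : ((true :: (X ++ [false])) : List Bool).getLast? = some false := h1
  rw [h1']
  simp
  rw [h2]
  simp
  omega

lemma flaw_formula (A X C : List Bool) (hA : height A = 0) (hX : height X = 0)
    (hXp : ∀ k, 0 ≤ height (X.take k)) :
    flR 0 (A ++ true :: (X ++ false :: C)) = flR 0 A + flR 0 C := by
  have e1 : flR 0 (true :: (X ++ false :: C)) = flR 1 (X ++ false :: C) := by
    show (if true = true ∧ (0:ℤ) < 0 then 1 else 0) + flR (0 + stp true) _ = _
    simp [stp]
  rw [flR_append, hA]
  simp only [add_zero]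
  have e2 : flR 1 (X ++ false :: C) = flR 1 X + flR (1 + height X) (false :: C) :=
    flR_append _ _ _
  have e3 : flR 1 X = 0 := flR_eq_zero_of_nonneg _ _ (by intro k; have := hXp k; omega)
  have e4 : flR (1 + height X) (false :: C) = flR 0 C := by
    rw [hX]
    show (if false = true ∧ (1:ℤ)+0 < 0 then 1 else 0) + flR ((1+0) + stp false) C = _
    simp [stp]
  rw [e1, e2, e3, e4]
  omega

lemma main_bij (m r : ℕ) (hr : 1 ≤ r) :
    ∑ q ∈ ((Finset.range (m+1) ×ˢ Finset.range r).sigma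
        (fun ij => DF (m - ij.1) (m - ij.1) ×ˢ
          (DF (r - 1 - ij.2) (r - 1 - ij.2) ×ˢ DF (ij.1 + ij.2) ij.1))),
      (Polynomial.X : Polynomial ℤ) ^ ((pkR q.2.1 + pkR q.2.2.1 + pkR q.2.2.2) + 1)
    = ∑ w ∈ DF (m+r) m, (Polynomial.X : Polynomial ℤ) ^ (pkR w) := by
  classical
  apply Finset.sum_bij
    (i := fun q _ => q.2.2.2 ++ true :: ((q.2.2.1).map Bool.not ++ false :: q.2.1))
  -- the three goals: maps-to, injective, surjective, and values
  case hi =>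
    rintro ⟨⟨i, j⟩, ⟨C, E, A⟩⟩ hq
    simp only [Finset.mem_sigma, Finset.mem_product, Finset.mem_range] at hq
    obtain ⟨⟨hi, hj⟩, hC, hE, hA⟩ := hq
    rw [mem_DF] at hC hE hA
    obtain ⟨hClen, hCc, hCf⟩ := hC
    obtain ⟨hElen, hEc, hEf⟩ := hE
    obtain ⟨hAlen, hAc, hAf⟩ := hA
    have hCcf : C.count false = m - i := by have := count_tf C; omega
    have hEcf : E.count false = r - 1 - j := by have := count_tf E; omega
    have hAcf : A.count false = i + j := by have := count_tf A; omega
    have hAh : height A = 0 := by rw [height, hAc, hAcf]; ring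
    have hEh : height E = 0 := by rw [height, hEc, hEcf]; ring
    have hXh : height (E.map Bool.not) = 0 := by rw [height_map_not, hEh]; ring
    have hEpre : ∀ k, height (E.take k) ≤ 0 :=
      take_height_nonpos_of_all_flaws E (by rw [hEf, hEc])
    have hXpre : ∀ k, 0 ≤ height ((E.map Bool.not).take k) := by
      intro k
      rw [← List.map_take, height_map_not]
      have := hEpre k
      omega
    rw [mem_DF]
    refine ⟨?_, ?_, ?_⟩
    · simp only [List.length_append, List.length_cons, List.length_map]
      rw [hAlen, hElen, hClen]
      omega
    · simp only [List.count_append, List.count_cons]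
      rw [count_not_true, hAc, hEcf, hCc]
      simp
      omega
    · rw [flaw_formula A (E.map Bool.not) C hAh hXh hXpre, hAf, hCf]
      omega
  case i_inj =>
    rintro ⟨⟨i1, j1⟩, ⟨C1, E1, A1⟩⟩ hq1 ⟨⟨i2, j2⟩, ⟨C2, E2, A2⟩⟩ hq2 heq
    simp only [Finset.mem_sigma, Finset.mem_product, Finset.mem_range] at hq1 hq2
    obtain ⟨⟨hi1, hj1⟩, hC1, hE1, hA1⟩ := hq1
    obtain ⟨⟨hi2, hj2⟩, hC2, hE2, hA2⟩ := hq2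
    rw [mem_DF] at hC1 hE1 hA1 hC2 hE2 hA2
    simp only at heq
    -- derive the height properties for both sides
    have props : ∀ (n' m' i' : ℕ) (C E A : List Bool),
        (A.length = 2*(n') ∧ A.count true = n' ∧ flR 0 A = i') →
        (E.length = 2*m' ∧ E.count true = m' ∧ flR 0 E = m') →
        height A = 0 ∧ height (E.map Bool.not) = 0 ∧
          (∀ k, 0 ≤ height ((E.map Bool.not).take k)) := by
      rintro n' m' i' C E A ⟨hAlen, hAc, _⟩ ⟨hElen, hEc, hEf⟩
      have hAcf : A.count false = n' := by have := count_tf A; omega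
      have hEcf : E.count false = m' := by have := count_tf E; omega
      have hEh : height E = 0 := by rw [height, hEc, hEcf]; ring
      refine ⟨by rw [height, hAc, hAcf]; ring, by rw [height_map_not, hEh]; ring, ?_⟩
      intro k
      rw [← List.map_take, height_map_not]
      have := take_height_nonpos_of_all_flaws E (by rw [hEf, hEc]) k
      omega
    obtain ⟨hA1h, hX1h, hX1p⟩ := props _ _ _ C1 E1 A1 hA1 hE1
    obtain ⟨hA2h, hX2h, hX2p⟩ := props _ _ _ C2 E2 A2 hA2 hE2
    have hC1p : ∀ k, height (C1.take k) ≤ 0 :=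
      take_height_nonpos_of_all_flaws C1 (by rw [hC1.2.2, hC1.2.1])
    have hC2p : ∀ k, height (C2.take k) ≤ 0 :=
      take_height_nonpos_of_all_flaws C2 (by rw [hC2.2.2, hC2.2.1])
    obtain ⟨eA, eX, eC⟩ := decomp_unique A1 (E1.map Bool.not) C1 A2 (E2.map Bool.not) C2
      hA1h hX1h hX1p hC1p hA2h hX2h hX2p hC2p heq
    have eE : E1 = E2 := by
      have := congrArg (List.map Bool.not) eX
      rwa [map_not_not, map_not_not] at this
    have ei : i1 = i2 := by rw [← hA1.2.2, ← hA2.2.2, eA]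
    have ej : j1 = j2 := by
      have h1 := hA1.1
      have h2 := hA2.1
      rw [eA] at h1
      omega
    subst eA; subst eE; subst eC; subst ei; subst ej
    rfl
  case i_surj =>
    intro w hw
    rw [mem_DF] at hw
    obtain ⟨hwlen, hwc, hwf⟩ := hw
    have hwcf : w.count false = m + r := by have := count_tf w; omega
    have hwh : height w = 0 := by rw [height, hwc, hwcf]; ring
    have hpos : ∃ u, 1 ≤ height (w.take u) := by
      by_contra hcon
      push_neg at hcon
      have : flR 0 w = w.count true :=
        flR_eq_count_of_nonpos 0 w (by intro k; have := hcon k; omega)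
      rw [hwf, hwc] at this
      omega
    obtain ⟨A, B, C, hrec, hAh, hBh, hCh, hBp, hCp⟩ := decomp w hwh hpos
    set E := B.map Bool.not with hEdef
    have hBE : E.map Bool.not = B := by rw [hEdef, map_not_not]
    -- counts
    have hAc : A.count true = A.count false := by
      rw [height] at hAh; have := count_tf A; omega
    have hBc : B.count true = B.count false := by
      rw [height] at hBh; have := count_tf B; omega
    have hCc : C.count true = C.count false := by
      rw [height] at hCh; have := count_tf C; omega
    have hflaw : flR 0 w = flR 0 A + flR 0 C := by
      rw [hrec]
      exact flaw_formula A B C hAh hBh hBp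
    have hCf : flR 0 C = C.count true :=
      flR_eq_count_of_nonpos 0 C (by intro k; have := hCp k; omega)
    have hEf : flR 0 E = E.count true := by
      apply flR_eq_count_of_nonpos
      intro k
      rw [hEdef, ← List.map_take, height_map_not]
      have := hBp k
      omega
    have hEc : E.count true = B.count false := count_not_true B
    have hElen : E.length = B.length := by simp [hEdef]
    have hAfl : flR 0 A ≤ A.count true := flR_le_count 0 A
    -- define indices
    set i := flR 0 A with hidef
    set j := A.count true - i with hjdef
    -- global length/count equation
    have hlen2 : A.length + 1 + (B.length + 1 + C.length) = 2*(m+r) := by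
      rw [hrec] at hwlen
      simp only [List.length_append, List.length_cons] at hwlen
      omega
    have hcnt2 : A.count true + 1 + (B.count true + C.count true) = m + r := by
      rw [hrec] at hwc
      simp only [List.count_append, List.count_cons] at hwc
      simp at hwc
      omega
    have hlenA := count_tf A
    have hlenB := count_tf B
    have hlenC := count_tf C
    have him : i + C.count true = m := by
      rw [hidef, ← hCf]
      rw [hwf] at hflaw
      omega
    have hjr : j + 1 + B.count true ≤ r ∧ B.count true = r - 1 - j ∧ i ≤ m ∧ j < r := by
      constructor
      · omega
      constructor
      · omega
      constructor
      · omega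
      · omega
    refine ⟨⟨⟨i, j⟩, ⟨C, E, A⟩⟩, ?_, ?_⟩
    · simp only [Finset.mem_sigma, Finset.mem_product, Finset.mem_range]
      refine ⟨⟨by omega, by omega⟩, ?_, ?_, ?_⟩
      · rw [mem_DF]
        refine ⟨by omega, by omega, by omega⟩
      · rw [mem_DF]
        have h1 : E.count true = r - 1 - j := by omega
        have h2 : E.length = 2 * (r - 1 - j) := by omega
        exact ⟨h2, h1, by rw [hEf, h1]⟩
      · rw [mem_DF]
        refine ⟨by omega, by omega, by omega⟩
    · simp only
      rw [hBE, ← hrec]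
  case h =>
    rintro ⟨⟨i, j⟩, ⟨C, E, A⟩⟩ hq
    simp only
    rw [pk_formula]

lemma sum_comm3 {α β γ M : Type*} [AddCommMonoid M] (s : Finset α) (t : Finset β)
    (u : Finset γ) (f : α → β → γ → M) :
    ∑ a ∈ s, ∑ b ∈ t, ∑ c ∈ u, f a b c = ∑ c ∈ u, ∑ b ∈ t, ∑ a ∈ s, f a b c := by
  calc ∑ a ∈ s, ∑ b ∈ t, ∑ c ∈ u, f a b c
      = ∑ a ∈ s, ∑ c ∈ u, ∑ b ∈ t, f a b c := by
        apply Finset.sum_congr rfl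
        intros
        exact Finset.sum_comm
    _ = ∑ c ∈ u, ∑ a ∈ s, ∑ b ∈ t, f a b c := Finset.sum_comm
    _ = ∑ c ∈ u, ∑ b ∈ t, ∑ a ∈ s, f a b c := by
        apply Finset.sum_congr rfl
        intros
        exact Finset.sum_comm

end DPR

/-- The recurrence
`P_{m+r,m}(x) = x Σ_{i=0}^{m} Σ_{j=0}^{r-1} P_{m-i,m-i}(x) P_{r-1-j,r-1-j}(x) P_{i+j,i}(x)`
for `r ≥ 1`. -/
theorem peak_poly_recurrence (m r : ℕ) (hr : 1 ≤ r) :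
    Ppoly (m + r) m =
      Polynomial.X * ∑ i ∈ Finset.range (m + 1), ∑ j ∈ Finset.range r,
        Ppoly (m - i) (m - i) * Ppoly (r - 1 - j) (r - 1 - j) * Ppoly (i + j) i := by
  classical
  rw [DPR.Ppoly_eq_sum, ← DPR.main_bij m r hr]
  rw [Finset.sum_sigma]
  simp only [Finset.sum_product]
  simp only [DPR.Ppoly_eq_sum, Finset.mul_sum, Finset.sum_mul, ← pow_add, ← pow_succ']
  apply Finset.sum_congr rfl
  intro i _
  apply Finset.sum_congr rfl
  intro j _
  rw [DPR.sum_comm3]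
end

section
/- For every m ≥ 1 and every k with 0 ≤ k ≤ m−1, the number of Dyck paths of semilength m in which every up step is a flaw (m flaws) with exactly k peaks satisfies (k+1)·p_{m,m,k} = C(m−1,k)·C(m,k), where C(a,b) denotes the binomial coefficient; equivalently, P_{m,m}(x) = Σ_{k=1}^{m} (1/k)·C(m−1,k−1)·C(m,k−1)·x^{k−1}, where P_{m,m}(x) = Σ_{k≥0} p_{m,m,k} x^k. -/
namespace AFP


lemma count_bool (l : List Bool) : l.count true + l.count false = l.length := by
  induction l with
  | nil => simp
  | cons c l ih => cases c <;> simp [List.count_cons] <;> omega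

lemma card_filter_shift (P : ℕ → Prop) [DecidablePred P] (n : ℕ) :
    ((Finset.range (n+1)).filter P).card
      = ((Finset.range n).filter (fun i => P (i+1))).card + (if P 0 then 1 else 0) := by
  simp only [Finset.card_filter]
  exact Finset.sum_range_succ' _ n

lemma count_true_card (l : List Bool) :
    ((Finset.range l.length).filter (fun i => l.getD i false = true)).card = l.count true := by
  induction l with
  | nil => simp
  | cons c l ih =>
    have : (c :: l).length = l.length + 1 := by simp
    rw [this, card_filter_shift]
    simp only [List.getD_cons_succ, List.getD_cons_zero]
    rw [ih]
    cases c <;> simp [List.count_cons]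

lemma take_succ_getD (l : List Bool) (i : ℕ) (h : i < l.length) :
    l.take (i+1) = l.take i ++ [l.getD i false] := by
  rw [List.take_succ, List.getElem?_eq_getElem h, List.getD_eq_getElem l false h]
  rfl

lemma flaws_eq_iff (m : ℕ) (l : List Bool) (hd : IsDyck m l) :
    flaws l = m ↔ ∀ j, (l.take j).count true ≤ (l.take j).count false := by
  obtain ⟨hlen, hct⟩ := hd
  have hcf : l.count false = m := by have := count_bool l; omega
  have hheight : ∀ t : List Bool, height t < 0 ↔ t.count true < t.count false := by
    intro t; unfold height; omega
  constructor
  · intro hf j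
    -- from flaws = m, the filter equals the set of all true positions
    have hsub : (Finset.range l.length).filter
        (fun i => l.getD i false = true ∧ height (l.take i) < 0)
        ⊆ (Finset.range l.length).filter (fun i => l.getD i false = true) := by
      intro i hi
      simp only [Finset.mem_filter] at *
      tauto
    have hcard : ((Finset.range l.length).filter (fun i => l.getD i false = true)).card
        ≤ ((Finset.range l.length).filter
          (fun i => l.getD i false = true ∧ height (l.take i) < 0)).card := by
      rw [count_true_card, hct, ← hf]
      exact le_of_eq rfl
    have heq := Finset.eq_of_subset_of_card_le hsub hcard
    have hkey : ∀ i, i < l.length → l.getD i false = true → height (l.take i) < 0 := by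
      intro i hi hgi
      have : i ∈ (Finset.range l.length).filter (fun i => l.getD i false = true) :=
        Finset.mem_filter.mpr ⟨Finset.mem_range.mpr hi, hgi⟩
      rw [← heq] at this
      exact (Finset.mem_filter.mp this).2.2
    -- now prove prefix inequality by induction
    induction j with
    | zero => simp
    | succ j ihj =>
      rcases le_or_gt l.length j with hj | hj
      · rw [List.take_of_length_le hj, List.take_of_length_le (by omega)] at *
        omega
      · rw [take_succ_getD l j hj, List.count_append, List.count_append]
        rcases hgb : l.getD j false with _ | _
        · simp only [List.count_singleton]
          simp
          omega
        · have := hkey j hj hgb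
          rw [hheight] at this
          have hcnt : (l.take j).count true < (l.take j).count false := this
          simp [List.count_singleton]
          omega
  · intro hpre
    unfold flaws
    have : (Finset.range l.length).filter
        (fun i => l.getD i false = true ∧ height (l.take i) < 0)
        = (Finset.range l.length).filter (fun i => l.getD i false = true) := by
      apply Finset.filter_congr
      intro i hi
      rw [Finset.mem_range] at hi
      constructor
      · tauto
      · intro hgi
        refine ⟨hgi, ?_⟩
        rw [hheight]
        have h1 := hpre i
        have h2 := hpre (i+1)
        rw [take_succ_getD l i hi, hgi, List.count_append, List.count_append] at h2
        simp at h2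
        omega
    rw [this, count_true_card, hct]


lemma peaks_nil : peaks [] = 0 := by simp [peaks]


lemma peaks_snoc (l : List Bool) (x : Bool) :
    peaks (l ++ [x]) = peaks l + (if l.getLast? = some true ∧ x = false then 1 else 0) := by
  rcases List.eq_nil_or_concat l with rfl | ⟨l', c, rfl⟩
  · simp [peaks]
  · simp only [List.concat_eq_append]
    have hlast : (l' ++ [c]).getLast? = some c := by simp
    rw [hlast]
    have h1 : ((l' ++ [c]) ++ [x]).length - 1 = l'.length + 1 := by simp
    have h2 : (l' ++ [c]).length - 1 = l'.length := by simp
    unfold peaks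
    rw [h1, h2, Finset.range_add_one, Finset.filter_insert]
    have hfc : Finset.filter
        (fun i => ((l' ++ [c]) ++ [x]).getD i false = true ∧ ((l' ++ [c]) ++ [x]).getD (i+1) false = false)
        (Finset.range l'.length)
        = Finset.filter
        (fun i => (l' ++ [c]).getD i false = true ∧ (l' ++ [c]).getD (i+1) false = false)
        (Finset.range l'.length) := by
      apply Finset.filter_congr
      intro i hi
      rw [Finset.mem_range] at hi
      have e1 : ((l' ++ [c]) ++ [x]).getD i false = (l' ++ [c]).getD i false :=
        List.getD_append (l' ++ [c]) [x] false i (by simp; omega)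
      have e2 : ((l' ++ [c]) ++ [x]).getD (i+1) false = (l' ++ [c]).getD (i+1) false :=
        List.getD_append (l' ++ [c]) [x] false (i+1) (by simp; omega)
      rw [e1, e2]
    have hc : ((l' ++ [c]) ++ [x]).getD l'.length false = c := by
      rw [List.getD_append (l' ++ [c]) [x] false l'.length (by simp)]
      rw [List.getD_append_right l' [c] false l'.length (le_refl _)]
      simp
    have hx : ((l' ++ [c]) ++ [x]).getD (l'.length + 1) false = x := by
      rw [List.getD_append_right (l' ++ [c]) [x] false (l'.length + 1) (by simp)]
      simp
    rw [hfc, hc, hx]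
    by_cases h : c = true ∧ x = false
    · rw [if_pos h, if_pos (⟨by simp [h.1], h.2⟩ : some c = some true ∧ x = false),
        Finset.card_insert_of_notMem (by simp)]
    · rw [if_neg h, if_neg (by simpa using h)]
      omega

lemma peaks_append (u v : List Bool) :
    peaks (u ++ v) = peaks u + peaks v +
      (if u.getLast? = some true ∧ v.head? = some false then 1 else 0) := by
  induction v using List.reverseRecOn with
  | nil => simp [peaks]
  | append_singleton v' x ih =>
    rcases List.eq_nil_or_concat v' with rfl | ⟨w, c, rfl⟩
    · simp only [List.nil_append, peaks_snoc]
      simp [peaks]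
    · simp only [List.concat_eq_append] at ih ⊢
      rw [← List.append_assoc, peaks_snoc, ih, peaks_snoc (w ++ [c]) x]
      have h1 : (u ++ (w ++ [c])).getLast? = some c := by simp
      have h2 : (w ++ [c]).getLast? = some c := by simp
      have h3 : ((w ++ [c]) ++ [x]).head? = (w ++ [c]).head? := by
        rcases w with _ | ⟨z, w⟩ <;> simp
      rw [h1, h2, h3]
      ring
lemma peaks_replicate (n : ℕ) (c : Bool) : peaks (List.replicate n c) = 0 := by
  unfold peaks
  rw [Finset.card_eq_zero, Finset.filter_eq_empty_iff]
  intro i hi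
  rw [Finset.mem_range, List.length_replicate] at hi
  have h1 : (List.replicate n c).getD i false = c := by
    rw [List.getD_eq_getElem _ _ (by simpa using (by omega : i < n))]; simp
  have h2 : (List.replicate n c).getD (i+1) false = c := by
    rw [List.getD_eq_getElem _ _ (by simpa using (by omega : i+1 < n))]; simp
  rw [h1, h2]
  rintro ⟨rfl, h⟩
  exact absurd h (by simp)


def build : List ℕ → List ℕ → List Bool
  | x :: a, y :: b => (List.replicate x false ++ List.replicate y true) ++ build a b
  | _, _ => []

lemma build_cons (x y : ℕ) (a b : List ℕ) :
    build (x :: a) (y :: b) = (List.replicate x false ++ List.replicate y true) ++ build a b := rfl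

lemma build_count_true : ∀ (a b : List ℕ), a.length = b.length →
    (build a b).count true = b.sum := by
  intro a
  induction a with
  | nil => intro b h; rw [(List.length_eq_zero_iff).mp h.symm]; simp [build]
  | cons x a ih =>
    intro b h
    rcases b with _ | ⟨y, b⟩
    · simp at h
    · rw [build_cons, List.count_append, List.count_append, ih b (by simpa using h)]
      simp [List.count_replicate]

lemma build_count_false : ∀ (a b : List ℕ), a.length = b.length →
    (build a b).count false = a.sum := by
  intro a
  induction a with
  | nil => intro b h; simp [build]
  | cons x a ih =>
    intro b h
    rcases b with _ | ⟨y, b⟩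
    · simp at h
    · rw [build_cons, List.count_append, List.count_append, ih b (by simpa using h)]
      simp [List.count_replicate]

lemma build_length (a b : List ℕ) (h : a.length = b.length) :
    (build a b).length = a.sum + b.sum := by
  rw [← count_bool (build a b), build_count_true a b h, build_count_false a b h, Nat.add_comm]

lemma build_head (x y : ℕ) (a b : List ℕ) (hx : 0 < x) :
    (build (x :: a) (y :: b)).head? = some false := by
  rw [build_cons]
  rcases x with _ | x
  · omega
  · simp [List.replicate_succ]

lemma build_peaks : ∀ (a b : List ℕ), a.length = b.length →
    (∀ z ∈ a, 0 < z) → (∀ z ∈ b, 0 < z) →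
    peaks (build a b) = a.length - 1 := by
  intro a
  induction a with
  | nil => intro b h _ _; rw [(List.length_eq_zero_iff).mp h.symm]; simp [build, peaks_nil]
  | cons x a ih =>
    intro b h ha hb
    rcases b with _ | ⟨y, b⟩
    · simp at h
    · have hx : 0 < x := ha x (by simp)
      have hy : 0 < y := hb y (by simp)
      rw [build_cons, peaks_append, peaks_append, peaks_replicate, peaks_replicate,
        ih b (by simpa using h) (fun z hz => ha z (by simp [hz])) (fun z hz => hb z (by simp [hz]))]
      have h1 : (List.replicate x false).getLast? = some false := by
        rcases x with _ | x; · omega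
        · simp [List.getLast?_replicate]
      have h2 : (List.replicate y true).head? = some true := by
        rcases y with _ | y; · omega
        · simp [List.replicate_succ]
      have h3 : (List.replicate x false ++ List.replicate y true).getLast? = some true := by
        rw [List.getLast?_append]
        rcases y with _ | y; · omega
        · simp [List.getLast?_replicate]
      rw [h1, h2, h3]
      rcases a with _ | ⟨x', a⟩
      · have : b = [] := by simpa using h
        subst this
        simp [build]
      · rcases b with _ | ⟨y', b⟩
        · simp at h
        · rw [build_head x' y' a b (ha x' (by simp))]
          simp


lemma build_prefix : ∀ (a b : List ℕ) (e : ℕ), a.length = b.length →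
    (∀ i, (b.take i).sum ≤ e + (a.take i).sum) →
    ∀ j, ((build a b).take j).count true ≤ e + ((build a b).take j).count false := by
  intro a
  induction a with
  | nil => intro b e h hdom j; simp [build]
  | cons x a ih =>
    intro b e h hdom j
    rcases b with _ | ⟨y, b⟩
    · simp at h
    · have hxy : y ≤ e + x := by
        have := hdom 1
        simpa using this
    -- decompose the take
      rw [build_cons]
      have hslen : (List.replicate x false ++ List.replicate y true).length = x + y := by simp
      rw [List.take_append, List.count_append, List.count_append, hslen]
      have e2 : (List.replicate x false ++ List.replicate y true).take j
          = List.replicate (min j x) false ++ List.replicate ((j - x) ⊓ y) true := by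
        rw [List.take_append, List.take_replicate, List.take_replicate,
          List.length_replicate]
      rw [e2, List.count_append, List.count_append]
      have hdom' : ∀ i, (b.take i).sum ≤ (e + x - y) + (a.take i).sum := by
        intro i
        have := hdom (i+1)
        simp only [List.take_succ_cons, List.sum_cons] at this
        omega
      have IH := ih b (e + x - y) (by simpa using h) hdom' (j - (x + y))
      have hmm : ∀ u v : ℕ, (List.replicate u false).count true = 0 ∧
          (List.replicate u false).count false = u ∧ (List.replicate v true).count true = v ∧
          (List.replicate v true).count false = 0 := by
        intro u v
        refine ⟨?_, ?_, ?_, ?_⟩ <;> simp [List.count_replicate]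
      obtain ⟨c1, c2, c3, c4⟩ := hmm (min j x) ((j - x) ⊓ y)
      rw [c1, c2, c3, c4]
      rcases le_or_gt j (x + y) with hj | hj
      · have hz : j - (x+y) = 0 := by omega
        rw [hz]
        simp only [List.take_zero, List.count_nil]
        rcases le_or_gt j x with hjx | hjx
        · have h1 : j - x = 0 := by omega
          have h2 : (0:ℕ) ⊓ y = 0 := by simp
          rw [h1, h2]
          omega
        · have h1 : (j - x) ⊓ y = j - x := min_eq_left (by omega)
          have h2 : min j x = x := min_eq_right (by omega)
          rw [h1, h2]
          omega
      · have h1 : (j - x) ⊓ y = y := min_eq_right (by omega)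
        have h2 : min j x = x := min_eq_right (by omega)
        rw [h1, h2]
        omega

lemma lead_falses (x y : ℕ) (hy : 0 < y) (R : List Bool) :
    List.takeWhile (fun c => !c) (List.replicate x false ++ (List.replicate y true ++ R))
      = List.replicate x false := by
  rw [List.takeWhile_append]
  rw [if_pos (by rw [List.takeWhile_replicate]; simp)]
  rcases y with _ | y
  · omega
  · rw [List.replicate_succ, List.cons_append, List.takeWhile_cons]
    simp

lemma lead_trues (y : ℕ) (R : List Bool) (hR : R = [] ∨ R.head? = some false) :
    List.takeWhile (fun c => c) (List.replicate y true ++ R) = List.replicate y true := by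
  rw [List.takeWhile_append]
  rw [if_pos (by rw [List.takeWhile_replicate]; simp)]
  rcases hR with rfl | hR
  · simp
  · rcases R with _ | ⟨z, R⟩
    · simp
    · simp only [List.head?_cons, Option.some_inj] at hR
      subst hR
      simp [List.takeWhile_cons]

lemma build_inj : ∀ (a b a' b' : List ℕ), a.length = b.length → a'.length = b'.length →
    (∀ z ∈ a, 0 < z) → (∀ z ∈ b, 0 < z) → (∀ z ∈ a', 0 < z) → (∀ z ∈ b', 0 < z) →
    build a b = build a' b' → a = a' ∧ b = b' := by
  intro a
  induction a with
  | nil =>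
    intro b a' b' h h' _ _ ha' _ heq
    rw [(List.length_eq_zero_iff).mp h.symm] at *
    rcases a' with _ | ⟨x', a'⟩
    · exact ⟨rfl, (List.length_eq_zero_iff).mp h'.symm ▸ rfl⟩
    · rcases b' with _ | ⟨y', b'⟩
      · simp at h'
      · exfalso
        have := build_head x' y' a' b' (ha' x' (by simp))
        rw [← heq] at this
        simp [build] at this
  | cons x a ih =>
    intro b a' b' h h' ha hb ha' hb' heq
    rcases b with _ | ⟨y, b⟩
    · simp at h
    rcases a' with _ | ⟨x', a''⟩
    · exfalso
      have := build_head x y a b (ha x (by simp))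
      rw [heq] at this
      rw [(List.length_eq_zero_iff).mp h'.symm] at this
      simp [build] at this
    rcases b' with _ | ⟨y', b''⟩
    · simp at h'
    have hx : 0 < x := ha x (by simp)
    have hy : 0 < y := hb y (by simp)
    have hx' : 0 < x' := ha' x' (by simp)
    have hy' : 0 < y' := hb' y' (by simp)
    rw [build_cons, build_cons, List.append_assoc, List.append_assoc] at heq
    -- leading falses
    have e1 : List.replicate x false = List.replicate x' false := by
      have := congrArg (List.takeWhile (fun c => !c)) heq
      rwa [lead_falses x y hy, lead_falses x' y' hy'] at this
    have hxx : x = x' := by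
      have := congrArg List.length e1
      simpa using this
    subst hxx
    have heq2 : List.replicate y true ++ build a b
        = List.replicate y' true ++ build a'' b'' := by
      have := List.append_cancel_left heq
      exact this
    have hbR : build a b = [] ∨ (build a b).head? = some false := by
      rcases a with _ | ⟨x₂, a₂⟩
      · left; simp [build]
      · rcases b with _ | ⟨y₂, b₂⟩
        · simp at h
        · right; exact build_head x₂ y₂ a₂ b₂ (ha x₂ (by simp))
    have hbR' : build a'' b'' = [] ∨ (build a'' b'').head? = some false := by
      rcases a'' with _ | ⟨x₂, a₂⟩
      · left; simp [build]
      · rcases b'' with _ | ⟨y₂, b₂⟩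
        · simp at h'
        · right; exact build_head x₂ y₂ a₂ b₂ (ha' x₂ (by simp))
    have e2 : List.replicate y true = List.replicate y' true := by
      have := congrArg (List.takeWhile (fun c => c)) heq2
      rwa [lead_trues y _ hbR, lead_trues y' _ hbR'] at this
    have hyy : y = y' := by
      have := congrArg List.length e2
      simpa using this
    subst hyy
    have heq3 : build a b = build a'' b'' := List.append_cancel_left heq2
    obtain ⟨hA, hB⟩ := ih b a'' b'' (by simpa using h) (by simpa using h')
      (fun z hz => ha z (by simp [hz])) (fun z hz => hb z (by simp [hz]))
      (fun z hz => ha' z (by simp [hz])) (fun z hz => hb' z (by simp [hz])) heq3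
    exact ⟨by rw [hA], by rw [hB]⟩


lemma dropWhile_shape {α : Type*} (p : α → Bool) (l : List α) :
    l.dropWhile p = [] ∨ ∃ z t, l.dropWhile p = z :: t ∧ p z = false := by
  induction l with
  | nil => left; rfl
  | cons c l ih =>
    by_cases h : p c
    · rw [List.dropWhile_cons, if_pos h]; exact ih
    · right; exact ⟨c, l, by rw [List.dropWhile_cons, if_neg h], by simpa using h⟩

lemma takeWhile_repl (l : List Bool) (c : Bool) (h : ∀ z ∈ l.takeWhile (fun z => z == c), z == c) :
    l.takeWhile (fun z => z == c) = List.replicate (l.takeWhile (fun z => z == c)).length c := by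
  apply List.eq_replicate_of_mem
  intro b hb
  simpa using h b hb

lemma decomp : ∀ (n : ℕ) (l : List Bool), l.length ≤ n →
    ∀ e : ℕ, (∀ j, (l.take j).count true ≤ e + (l.take j).count false) →
    (l.count true = e + l.count false) →
    (l = [] ∨ l.head? = some false) →
    ∃ a b : List ℕ, a.length = b.length ∧ (∀ z ∈ a, 0 < z) ∧ (∀ z ∈ b, 0 < z) ∧
      l = build a b ∧ a.sum = l.count false ∧ b.sum = l.count true ∧
      (∀ i, (b.take i).sum ≤ e + (a.take i).sum) := by
  intro n
  induction n with
  | zero =>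
    intro l hl _ _ _ _
    have : l = [] := List.length_eq_zero_iff.mp (Nat.le_zero.mp hl)
    subst this
    exact ⟨[], [], rfl, by simp, by simp, rfl, by simp [build], by simp [build], by simp⟩
  | succ n ih =>
    intro l hl e hpre htot hhead
    rcases hhead with rfl | hhead
    · exact ⟨[], [], rfl, by simp, by simp, rfl, by simp [build], by simp [build], by simp⟩
    -- l = false :: l₂
    have hlne : l ≠ [] := by rintro rfl; simp at hhead
    set p1 : Bool → Bool := fun z => z == false with hp1
    set A := l.takeWhile p1 with hA
    set r := l.dropWhile p1 with hr
    set x := A.length with hx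
    have hArepl : A = List.replicate x false := by
      rw [hA, hx]
      apply List.eq_replicate_of_mem
      intro b hb
      have := List.mem_takeWhile_imp hb
      simpa [hp1] using this
    have hxpos : 0 < x := by
      rcases l with _ | ⟨c, l₂⟩
      · simp at hhead
      · simp only [List.head?_cons, Option.some_inj] at hhead
        subst hhead
        rw [hx, hA]
        simp [List.takeWhile_cons, hp1]
    have hlAr : A ++ r = l := List.takeWhile_append_dropWhile (p := p1) (l := l)
    -- r is nonempty and starts with true
    have hrshape := dropWhile_shape p1 l
    rcases hrshape with hre | ⟨z, r₂, hzr, hz⟩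
    · exfalso
      rw [← hr] at hre
      have : l = A := by rw [← hlAr, hre, List.append_nil]
      rw [this, hArepl] at htot
      simp [List.count_replicate] at htot
      omega
    · rw [← hr] at hzr
      have hztrue : z = true := by
        rcases z with _ | _
        · simp [hp1] at hz
        · rfl
      subst hztrue
      -- second run
      set p2 : Bool → Bool := fun z => z == true with hp2
      set B := r.takeWhile p2 with hB
      set s := r.dropWhile p2 with hs
      set y := B.length with hy
      have hBrepl : B = List.replicate y true := by
        rw [hB, hy]
        apply List.eq_replicate_of_mem
        intro b hb
        have := List.mem_takeWhile_imp hb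
        simpa [hp2] using this
      have hypos : 0 < y := by
        rw [hy, hB, hzr]
        simp [List.takeWhile_cons, hp2]
      have hrBs : B ++ s = r := List.takeWhile_append_dropWhile (p := p2) (l := r)
      have hsshape := dropWhile_shape p2 r
      have hshead : s = [] ∨ s.head? = some false := by
        rcases hsshape with h1 | ⟨w, t, hwt, hw⟩
        · left; rw [hs]; exact h1
        · right
          rw [hs, hwt]
          rcases w with _ | _
          · rfl
          · simp [hp2] at hw
      have hldec : l = List.replicate x false ++ (List.replicate y true ++ s) := by
        rw [← hlAr, ← hrBs, hArepl, hBrepl]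
      -- length bound for s
      have hslen : s.length + x + y = l.length := by
        have := congrArg List.length hldec
        simp at this
        omega
      -- take formula
      have htake : ∀ j, l.take (x + y + j) = List.replicate x false ++ (List.replicate y true ++ s.take j) := by
        intro j
        rw [hldec, List.take_append, List.take_append]
        rw [List.take_replicate, List.take_replicate]
        simp only [List.length_replicate]
        congr 2
        · congr 1; omega
        · congr 1; omega
        · congr 1; omega
      have hcount : ∀ j, (l.take (x + y + j)).count true = y + (s.take j).count true
          ∧ (l.take (x + y + j)).count false = x + (s.take j).count false := by
        intro j
        rw [htake j]
        constructor <;> simp [List.count_append, List.count_replicate]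
      -- key inequality y ≤ e + x
      have hyex : y ≤ e + x := by
        have h0 := hpre (x + y + 0)
        obtain ⟨c1, c2⟩ := hcount 0
        rw [c1, c2] at h0
        simp at h0
        omega
      -- totals for s
      have htots : l.count true = y + s.count true ∧ l.count false = x + s.count false := by
        have := congrArg (fun t => (List.count true t, List.count false t)) hldec
        simp [List.count_append, List.count_replicate] at this
        constructor
        · exact this.1
        · exact this.2
      -- apply IH
      have hpres : ∀ j, (s.take j).count true ≤ (e + x - y) + (s.take j).count false := by
        intro j
        have := hpre (x + y + j)
        obtain ⟨c1, c2⟩ := hcount j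
        rw [c1, c2] at this
        omega
      have htots' : s.count true = (e + x - y) + s.count false := by
        obtain ⟨t1, t2⟩ := htots
        omega
      obtain ⟨a', b', hlen', hpa', hpb', hbs', hsa', hsb', hdom'⟩ :=
        ih s (by omega) (e + x - y) hpres htots' hshead
      refine ⟨x :: a', y :: b', by simpa using hlen', ?_, ?_, ?_, ?_, ?_, ?_⟩
      · intro w hw
        rcases List.mem_cons.mp hw with rfl | hw
        · exact hxpos
        · exact hpa' w hw
      · intro w hw
        rcases List.mem_cons.mp hw with rfl | hw
        · exact hypos
        · exact hpb' w hw
      · rw [build_cons, ← hbs', List.append_assoc, ← hldec]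
      · obtain ⟨t1, t2⟩ := htots
        simp only [List.sum_cons]
        omega
      · obtain ⟨t1, t2⟩ := htots
        simp only [List.sum_cons]
        omega
      · intro i
        rcases i with _ | i
        · simp
        · have := hdom' i
          simp only [List.take_succ_cons, List.sum_cons]
          omega


def Dom (m t d : ℕ) : Set (List ℕ × List ℕ) :=
  {q | q.1.length = t + d ∧ q.2.length = t ∧ (∀ z ∈ q.1, 0 < z) ∧ (∀ z ∈ q.2, 0 < z)
     ∧ q.1.sum = m ∧ q.2.sum = m ∧ ∀ i, (q.2.take i).sum ≤ (q.1.take (i + d)).sum}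

noncomputable def F (m t d : ℕ) : ℕ := (Dom m t d).ncard

lemma finite_len_le {α : Type*} (s : Set α) (hs : s.Finite) (t : ℕ) :
    {l : List α | l.length ≤ t ∧ ∀ z ∈ l, z ∈ s}.Finite := by
  induction t with
  | zero =>
    apply Set.Finite.subset (Set.finite_singleton ([] : List α))
    rintro l ⟨hl, -⟩
    simp [List.length_eq_zero_iff.mp (Nat.le_zero.mp hl)]
  | succ t ih =>
    apply Set.Finite.subset (Set.Finite.union (Set.finite_singleton ([] : List α))
      (Set.Finite.image (fun q : α × List α => q.1 :: q.2) (Set.Finite.prod hs ih)))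
    rintro l ⟨hl, hz⟩
    cases l with
    | nil => exact Or.inl rfl
    | cons x l =>
      right
      exact ⟨(x, l), ⟨hz x (by simp), by simp at hl; exact ⟨hl, fun z h => hz z (by simp [h])⟩⟩, rfl⟩

lemma Dom_finite (m t d : ℕ) : (Dom m t d).Finite := by
  have h1 := finite_len_le (Set.Iic m) (Set.finite_Iic m) (t + d)
  have h2 := finite_len_le (Set.Iic m) (Set.finite_Iic m) t
  apply Set.Finite.subset (Set.Finite.prod h1 h2)
  rintro ⟨a, b⟩ ⟨hal, hbl, hap, hbp, has, hbs, -⟩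
  constructor
  · exact ⟨le_of_eq hal, fun z hz => by
      simp only [Set.mem_Iic]
      calc z ≤ a.sum := List.single_le_sum (fun x _ => Nat.zero_le x) z hz
      _ = m := has⟩
  · exact ⟨le_of_eq hbl, fun z hz => by
      simp only [Set.mem_Iic]
      calc z ≤ b.sum := List.single_le_sum (fun x _ => Nat.zero_le x) z hz
      _ = m := hbs⟩

lemma sum_pos_len (l : List ℕ) (hp : ∀ z ∈ l, 0 < z) : l.length ≤ l.sum := by
  induction l with
  | nil => simp
  | cons x l ih =>
    simp only [List.length_cons, List.sum_cons]
    have := hp x (by simp)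
    have := ih (fun z hz => hp z (by simp [hz]))
    omega

lemma F_zero (t d : ℕ) : F 0 t d = if t = 0 ∧ d = 0 then 1 else 0 := by
  by_cases h : t = 0 ∧ d = 0
  · obtain ⟨rfl, rfl⟩ := h
    rw [if_pos ⟨rfl, rfl⟩]
    have : Dom 0 0 0 = {(([] : List ℕ), ([] : List ℕ))} := by
      ext ⟨a, b⟩
      simp only [Dom, Set.mem_setOf_eq, Set.mem_singleton_iff, Prod.mk.injEq]
      constructor
      · rintro ⟨ha, hb, -⟩
        exact ⟨List.length_eq_zero_iff.mp (by simpa using ha), List.length_eq_zero_iff.mp hb⟩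
      · rintro ⟨rfl, rfl⟩
        refine ⟨by simp, by simp, by simp, by simp, by simp, by simp, by simp⟩
    rw [F, this, Set.ncard_singleton]
  · rw [if_neg h]
    have : Dom 0 t d = ∅ := by
      ext ⟨a, b⟩
      simp only [Dom, Set.mem_setOf_eq, Set.mem_empty_iff_false, iff_false]
      rintro ⟨ha, hb, hap, hbp, has, hbs, -⟩
      have h1 : a.length ≤ 0 := has ▸ sum_pos_len a hap
      have h2 : b.length ≤ 0 := hbs ▸ sum_pos_len b hbp
      omega
    rw [F, this, Set.ncard_empty]

lemma F_t_zero (m d : ℕ) : F (m+1) 0 d = 0 := by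
  have : Dom (m+1) 0 d = ∅ := by
    ext ⟨a, b⟩
    simp only [Dom, Set.mem_setOf_eq, Set.mem_empty_iff_false, iff_false]
    rintro ⟨ha, hb, hap, hbp, has, hbs, -⟩
    have : b = [] := List.length_eq_zero_iff.mp hb
    subst this
    simp at hbs
  rw [F, this, Set.ncard_empty]


def inc : List ℕ → List ℕ
  | [] => []
  | x :: l => (x+1) :: l

lemma inc_inj : Function.Injective inc := by
  intro a b h
  match a, b with
  | [], [] => rfl
  | [], y :: b => simp [inc] at h
  | x :: a, [] => simp [inc] at h
  | x :: a, y :: b =>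
    simp only [inc, List.cons.injEq] at h
    obtain ⟨h1, h2⟩ := h
    rw [show x = y by omega, h2]

lemma cons1_inj : Function.Injective (fun l : List ℕ => 1 :: l) := by
  intro a b h; simpa using h

lemma inc_cons (x : ℕ) (l : List ℕ) : inc (x :: l) = (x+1) :: l := rfl

lemma mem_Dom_iff (a b : List ℕ) (m t d : ℕ) : (a, b) ∈ Dom m t d ↔
    (a.length = t + d ∧ b.length = t ∧ (∀ z ∈ a, 0 < z) ∧ (∀ z ∈ b, 0 < z)
     ∧ a.sum = m ∧ b.sum = m ∧ ∀ i, (b.take i).sum ≤ (a.take (i + d)).sum) := Iff.rfl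

/-- membership intro lemmas -/
lemma mem_gg {m t d x y : ℕ} {a b : List ℕ} (h : (x::a, y::b) ∈ Dom m (t+1) d) :
    ((x+1)::a, (y+1)::b) ∈ Dom (m+1) (t+1) d := by
  rw [mem_Dom_iff] at h
  obtain ⟨h1, h2, h3, h4, h5, h6, h7⟩ := h
  simp only [List.length_cons, List.sum_cons] at h1 h2 h5 h6
  rw [mem_Dom_iff]
  refine ⟨by simp; omega, by simp; omega, ?_, ?_, by simp; omega, by simp; omega, ?_⟩
  · intro z hz
    rcases List.mem_cons.mp hz with rfl | hz
    · omega
    · exact h3 z (by simp [hz])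
  · intro z hz
    rcases List.mem_cons.mp hz with rfl | hz
    · omega
    · exact h4 z (by simp [hz])
  · intro i
    rcases i with _ | i
    · simp
    · have := h7 (i+1)
      have hi : i + 1 + d = (i + d) + 1 := by omega
      rw [hi] at this ⊢
      simp only [List.take_succ_cons, List.sum_cons] at this ⊢
      omega

lemma mem_11 {m t d : ℕ} {a b : List ℕ} (h : (a, b) ∈ Dom m t d) :
    (1::a, 1::b) ∈ Dom (m+1) (t+1) d := by
  rw [mem_Dom_iff] at h
  obtain ⟨h1, h2, h3, h4, h5, h6, h7⟩ := h
  rw [mem_Dom_iff]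
  refine ⟨by simp; omega, by simp; omega, ?_, ?_, by simp; omega, by simp; omega, ?_⟩
  · intro z hz
    rcases List.mem_cons.mp hz with rfl | hz
    · omega
    · exact h3 z hz
  · intro z hz
    rcases List.mem_cons.mp hz with rfl | hz
    · omega
    · exact h4 z hz
  · intro i
    rcases i with _ | i
    · simp
    · have := h7 i
      have hi : i + 1 + d = (i + d) + 1 := by omega
      rw [hi]
      simp only [List.take_succ_cons, List.sum_cons]
      omega

lemma mem_g1 {m t d x : ℕ} {a b : List ℕ} (h : (x::a, b) ∈ Dom m t (d+1)) :
    ((x+1)::a, 1::b) ∈ Dom (m+1) (t+1) d := by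
  rw [mem_Dom_iff] at h
  obtain ⟨h1, h2, h3, h4, h5, h6, h7⟩ := h
  simp only [List.length_cons, List.sum_cons] at h1 h5
  rw [mem_Dom_iff]
  refine ⟨by simp; omega, by simp; omega, ?_, ?_, by simp; omega, by simp; omega, ?_⟩
  · intro z hz
    rcases List.mem_cons.mp hz with rfl | hz
    · omega
    · exact h3 z (by simp [hz])
  · intro z hz
    rcases List.mem_cons.mp hz with rfl | hz
    · omega
    · exact h4 z hz
  · intro i
    rcases i with _ | i
    · simp
    · have := h7 i
      have hi : i + (d+1) = (i + d) + 1 := by omega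
      rw [hi] at this
      have hi2 : i + 1 + d = (i + d) + 1 := by omega
      rw [hi2]
      simp only [List.take_succ_cons, List.sum_cons] at this ⊢
      omega

lemma mem_1g {m t d y : ℕ} {a b : List ℕ} (hd : 1 ≤ d) (h : (a, y::b) ∈ Dom m (t+1) (d-1)) :
    (1::a, (y+1)::b) ∈ Dom (m+1) (t+1) d := by
  rw [mem_Dom_iff] at h
  obtain ⟨h1, h2, h3, h4, h5, h6, h7⟩ := h
  simp only [List.length_cons, List.sum_cons] at h2 h6
  rw [mem_Dom_iff]
  refine ⟨by simp; omega, by simp; omega, ?_, ?_, by simp; omega, by simp; omega, ?_⟩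
  · intro z hz
    rcases List.mem_cons.mp hz with rfl | hz
    · omega
    · exact h3 z hz
  · intro z hz
    rcases List.mem_cons.mp hz with rfl | hz
    · omega
    · exact h4 z (by simp [hz])
  · intro i
    rcases i with _ | i
    · simp
    · have := h7 (i+1)
      have hi : i + 1 + (d-1) = i + d := by omega
      rw [hi] at this
      have hi2 : i + 1 + d = (i + d) + 1 := by omega
      rw [hi2]
      simp only [List.take_succ_cons, List.sum_cons] at this ⊢
      omega

/-- elimination lemmas -/
lemma elim_gg {m t d x y : ℕ} {a b : List ℕ} (h : ((x+2)::a, (y+2)::b) ∈ Dom (m+1) (t+1) d) :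
    ((x+1)::a, (y+1)::b) ∈ Dom m (t+1) d := by
  rw [mem_Dom_iff] at h
  obtain ⟨h1, h2, h3, h4, h5, h6, h7⟩ := h
  simp only [List.length_cons, List.sum_cons] at h1 h2 h5 h6
  rw [mem_Dom_iff]
  refine ⟨by simp; omega, by simp; omega, ?_, ?_, by simp; omega, by simp; omega, ?_⟩
  · intro z hz
    rcases List.mem_cons.mp hz with rfl | hz
    · omega
    · exact h3 z (by simp [hz])
  · intro z hz
    rcases List.mem_cons.mp hz with rfl | hz
    · omega
    · exact h4 z (by simp [hz])
  · intro i
    rcases i with _ | i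
    · simp
    · have := h7 (i+1)
      have hi : i + 1 + d = (i + d) + 1 := by omega
      rw [hi] at this ⊢
      simp only [List.take_succ_cons, List.sum_cons] at this ⊢
      omega

lemma elim_11 {m t d : ℕ} {a b : List ℕ} (h : (1::a, 1::b) ∈ Dom (m+1) (t+1) d) :
    (a, b) ∈ Dom m t d := by
  rw [mem_Dom_iff] at h
  obtain ⟨h1, h2, h3, h4, h5, h6, h7⟩ := h
  simp only [List.length_cons, List.sum_cons] at h1 h2 h5 h6
  rw [mem_Dom_iff]
  refine ⟨by omega, by omega, ?_, ?_, by omega, by omega, ?_⟩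
  · exact fun z hz => h3 z (by simp [hz])
  · exact fun z hz => h4 z (by simp [hz])
  · intro i
    have := h7 (i+1)
    have hi : i + 1 + d = (i + d) + 1 := by omega
    rw [hi] at this
    simp only [List.take_succ_cons, List.sum_cons] at this
    omega

lemma elim_g1 {m t d x : ℕ} {a b : List ℕ} (h : ((x+2)::a, 1::b) ∈ Dom (m+1) (t+1) d) :
    ((x+1)::a, b) ∈ Dom m t (d+1) := by
  rw [mem_Dom_iff] at h
  obtain ⟨h1, h2, h3, h4, h5, h6, h7⟩ := h
  simp only [List.length_cons, List.sum_cons] at h1 h2 h5 h6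
  rw [mem_Dom_iff]
  refine ⟨by simp; omega, by omega, ?_, ?_, by simp; omega, by omega, ?_⟩
  · intro z hz
    rcases List.mem_cons.mp hz with rfl | hz
    · omega
    · exact h3 z (by simp [hz])
  · exact fun z hz => h4 z (by simp [hz])
  · intro i
    have := h7 (i+1)
    have hi : i + 1 + d = (i + d) + 1 := by omega
    rw [hi] at this
    have hi2 : i + (d+1) = (i + d) + 1 := by omega
    rw [hi2]
    simp only [List.take_succ_cons, List.sum_cons] at this ⊢
    omega

lemma elim_1g_d {m t d y : ℕ} {a b : List ℕ} (h : (1::a, (y+2)::b) ∈ Dom (m+1) (t+1) d) :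
    1 ≤ d := by
  rw [mem_Dom_iff] at h
  obtain ⟨h1, h2, h3, h4, h5, h6, h7⟩ := h
  by_contra hd
  have hd0 : d = 0 := by omega
  subst hd0
  have := h7 1
  simp [List.take_succ_cons] at this

lemma elim_1g {m t d y : ℕ} {a b : List ℕ} (h : (1::a, (y+2)::b) ∈ Dom (m+1) (t+1) d) :
    (a, (y+1)::b) ∈ Dom m (t+1) (d-1) := by
  have hd := elim_1g_d h
  rw [mem_Dom_iff] at h
  obtain ⟨h1, h2, h3, h4, h5, h6, h7⟩ := h
  simp only [List.length_cons, List.sum_cons] at h1 h2 h5 h6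
  rw [mem_Dom_iff]
  refine ⟨by omega, by simp; omega, ?_, ?_, by omega, by simp; omega, ?_⟩
  · exact fun z hz => h3 z (by simp [hz])
  · intro z hz
    rcases List.mem_cons.mp hz with rfl | hz
    · omega
    · exact h4 z (by simp [hz])
  · intro i
    rcases i with _ | i
    · simp
    · have := h7 (i+1)
      have hi : i + 1 + d = (i + d) + 1 := by omega
      rw [hi] at this
      have hi2 : i + 1 + (d-1) = i + d := by omega
      rw [hi2]
      simp only [List.take_succ_cons, List.sum_cons] at this ⊢
      omega

lemma Dom_cons {m t d : ℕ} {q : List ℕ × List ℕ} (h : q ∈ Dom (m+1) (t+1) d) :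
    ∃ x a y b, q = (x::a, y::b) ∧ 0 < x ∧ 0 < y := by
  obtain ⟨q1, q2⟩ := q
  rw [mem_Dom_iff] at h
  obtain ⟨h1, h2, h3, h4, -⟩ := h
  rcases q1 with _ | ⟨x, a⟩
  · simp at h1; omega
  rcases q2 with _ | ⟨y, b⟩
  · simp at h2
  exact ⟨x, a, y, b, rfl, h3 x (by simp), h4 y (by simp)⟩

def mapGG := Prod.map inc inc
def map11 := fun q : List ℕ × List ℕ => (1::q.1, 1::q.2)
def mapG1 := fun q : List ℕ × List ℕ => (inc q.1, 1::q.2)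
def map1G := fun q : List ℕ × List ℕ => (1::q.1, inc q.2)

lemma injGG : Function.Injective mapGG := by
  rintro ⟨a,b⟩ ⟨c,e⟩ h
  simp only [mapGG, Prod.map, Prod.mk.injEq] at h
  exact Prod.ext (inc_inj h.1) (inc_inj h.2)

lemma inj11 : Function.Injective map11 := by
  rintro ⟨a,b⟩ ⟨c,e⟩ h
  simp only [map11, Prod.mk.injEq, List.cons.injEq, true_and] at h
  exact Prod.ext h.1 h.2

lemma injG1 : Function.Injective mapG1 := by
  rintro ⟨a,b⟩ ⟨c,e⟩ h
  simp only [mapG1, Prod.mk.injEq, List.cons.injEq, true_and] at h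
  exact Prod.ext (inc_inj h.1) h.2

lemma inj1G : Function.Injective map1G := by
  rintro ⟨a,b⟩ ⟨c,e⟩ h
  simp only [map1G, Prod.mk.injEq, List.cons.injEq, true_and] at h
  exact Prod.ext h.1 (inc_inj h.2)

lemma head_mem_inc {m t d : ℕ} {q : List ℕ × List ℕ} (h : q ∈ Dom (m+1) (t+1) d) :
    True := trivial

lemma Dom_split (m t d : ℕ) :
    Dom (m+1) (t+1) d =
      (mapGG '' Dom m (t+1) d) ∪ (map11 '' Dom m t d) ∪ (mapG1 '' Dom m t (d+1)) ∪
      (if 1 ≤ d then map1G '' Dom m (t+1) (d-1) else ∅) := by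
  ext q
  constructor
  · intro hq
    obtain ⟨x, a, y, b, rfl, hx, hy⟩ := Dom_cons hq
    match x, y with
    | 1, 1 =>
      exact Or.inl (Or.inl (Or.inr ⟨(a, b), elim_11 hq, rfl⟩))
    | u+2, v+2 =>
      exact Or.inl (Or.inl (Or.inl ⟨((u+1)::a, (v+1)::b), elim_gg hq, rfl⟩))
    | u+2, 1 =>
      exact Or.inl (Or.inr ⟨((u+1)::a, b), elim_g1 hq, rfl⟩)
    | 1, v+2 =>
      have hd := elim_1g_d hq
      right
      rw [if_pos hd]
      exact ⟨(a, (v+1)::b), elim_1g hq, rfl⟩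
  · intro hq
    rcases hq with ((⟨⟨a,b⟩, hmem, rfl⟩ | ⟨⟨a,b⟩, hmem, rfl⟩) | ⟨⟨a,b⟩, hmem, rfl⟩) | hlast
    · -- GG
      have h1 : a.length = t + 1 + d := hmem.1
      have h2 : b.length = t + 1 := hmem.2.1
      rcases a with _ | ⟨x, a⟩; · simp at h1; omega
      rcases b with _ | ⟨y, b⟩; · simp at h2
      exact mem_gg hmem
    · exact mem_11 hmem
    · -- G1
      have h1 : a.length = t + (d+1) := hmem.1
      rcases a with _ | ⟨x, a⟩; · simp at h1
      exact mem_g1 hmem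
    · rcases Nat.lt_or_ge d 1 with hd | hd
      · rw [if_neg (by omega)] at hlast
        simp at hlast
      · rw [if_pos hd] at hlast
        obtain ⟨⟨a,b⟩, hmem, rfl⟩ := hlast
        have h2 : b.length = t + 1 := hmem.2.1
        rcases b with _ | ⟨y, b⟩; · simp at h2
        exact mem_1g hd hmem

lemma disj_head1 {S T : Set (List ℕ × List ℕ)} {f g : List ℕ × List ℕ → List ℕ × List ℕ}
    (hf : ∀ q ∈ S, (f q).1.head? ≠ some 1) (hg : ∀ q ∈ T, (g q).1.head? = some 1) :
    Disjoint (f '' S) (g '' T) := by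
  rw [Set.disjoint_left]
  rintro q ⟨u, hu, rfl⟩ ⟨v, hv, hvq⟩
  exact hf u hu (by rw [← hvq]; exact hg v hv)

lemma disj_head2 {S T : Set (List ℕ × List ℕ)} {f g : List ℕ × List ℕ → List ℕ × List ℕ}
    (hf : ∀ q ∈ S, (f q).2.head? ≠ some 1) (hg : ∀ q ∈ T, (g q).2.head? = some 1) :
    Disjoint (f '' S) (g '' T) := by
  rw [Set.disjoint_left]
  rintro q ⟨u, hu, rfl⟩ ⟨v, hv, hvq⟩
  exact hf u hu (by rw [← hvq]; exact hg v hv)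

lemma inc_head_ne {m t d : ℕ} {q : List ℕ × List ℕ} (h : q ∈ Dom m (t+1) d) :
    (inc q.1).head? ≠ some 1 ∧ (inc q.2).head? ≠ some 1 := by
  obtain ⟨a, b⟩ := q
  rw [mem_Dom_iff] at h
  obtain ⟨h1, h2, h3, h4, -⟩ := h
  rcases a with _ | ⟨x, a⟩; · simp at h1; omega
  rcases b with _ | ⟨y, b⟩; · simp at h2
  have hx := h3 x (by simp)
  have hy := h4 y (by simp)
  constructor <;> simp [inc_cons] <;> omega

lemma inc_head_ne' {m t d : ℕ} {q : List ℕ × List ℕ} (h : q ∈ Dom m t (d+1)) :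
    (inc q.1).head? ≠ some 1 := by
  obtain ⟨a, b⟩ := q
  rw [mem_Dom_iff] at h
  obtain ⟨h1, h2, h3, -⟩ := h
  rcases a with _ | ⟨x, a⟩; · simp at h1
  have hx := h3 x (by simp)
  simp [inc_cons]; omega


lemma F_rec (m t d : ℕ) :
    F (m+1) (t+1) d = F m (t+1) d + F m t d + F m t (d+1)
      + (if 1 ≤ d then F m (t+1) (d-1) else 0) := by
  have fin1 : (mapGG '' Dom m (t+1) d).Finite := (Dom_finite _ _ _).image _
  have fin2 : (map11 '' Dom m t d).Finite := (Dom_finite _ _ _).image _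
  have fin3 : (mapG1 '' Dom m t (d+1)).Finite := (Dom_finite _ _ _).image _
  have fin4 : (map1G '' Dom m (t+1) (d-1)).Finite := (Dom_finite _ _ _).image _
  have hd12 : Disjoint (mapGG '' Dom m (t+1) d) (map11 '' Dom m t d) :=
    disj_head1 (fun q hq => (inc_head_ne hq).1) (fun q _ => by simp [map11])
  have hd13 : Disjoint (mapGG '' Dom m (t+1) d) (mapG1 '' Dom m t (d+1)) :=
    disj_head2 (fun q hq => (inc_head_ne hq).2) (fun q _ => by simp [mapG1])
  have hd23 : Disjoint (map11 '' Dom m t d) (mapG1 '' Dom m t (d+1)) :=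
    (disj_head1 (fun q hq => inc_head_ne' hq) (fun q _ => by simp [map11])).symm
  have hd14 : Disjoint (mapGG '' Dom m (t+1) d) (map1G '' Dom m (t+1) (d-1)) :=
    disj_head1 (fun q hq => (inc_head_ne hq).1) (fun q _ => by simp [map1G])
  have hd24 : Disjoint (map11 '' Dom m t d) (map1G '' Dom m (t+1) (d-1)) :=
    (disj_head2 (fun q hq => (inc_head_ne hq).2) (fun q _ => by simp [map11])).symm
  have hd34 : Disjoint (mapG1 '' Dom m t (d+1)) (map1G '' Dom m (t+1) (d-1)) :=
    disj_head1 (fun q hq => inc_head_ne' hq) (fun q _ => by simp [map1G])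
  have c1 : (mapGG '' Dom m (t+1) d).ncard = F m (t+1) d :=
    Set.ncard_image_of_injective _ injGG
  have c2 : (map11 '' Dom m t d).ncard = F m t d :=
    Set.ncard_image_of_injective _ inj11
  have c3 : (mapG1 '' Dom m t (d+1)).ncard = F m t (d+1) :=
    Set.ncard_image_of_injective _ injG1
  have c4 : (map1G '' Dom m (t+1) (d-1)).ncard = F m (t+1) (d-1) :=
    Set.ncard_image_of_injective _ inj1G
  show (Dom (m+1) (t+1) d).ncard = _
  rw [Dom_split]
  rcases Nat.lt_or_ge d 1 with hd | hd
  · rw [if_neg (by omega), if_neg (by omega), Set.union_empty,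
      Set.ncard_union_eq (Set.disjoint_union_left.mpr ⟨hd13, hd23⟩) (fin1.union fin2) fin3,
      Set.ncard_union_eq hd12 fin1 fin2, c1, c2, c3]
    omega
  · rw [if_pos hd, if_pos hd,
      Set.ncard_union_eq (Set.disjoint_union_left.mpr
        ⟨Set.disjoint_union_left.mpr ⟨hd14, hd24⟩, hd34⟩) ((fin1.union fin2).union fin3) fin4,
      Set.ncard_union_eq (Set.disjoint_union_left.mpr ⟨hd13, hd23⟩) (fin1.union fin2) fin3,
      Set.ncard_union_eq hd12 fin1 fin2, c1, c2, c3, c4]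


def cfZ : ℕ → ℕ → ℕ → ℤ
  | 0, 0, 0 => 1
  | 0, _, _ => 0
  | _+1, 0, _ => 0
  | n+1, 1, d => (n.choose d : ℤ)
  | n+1, t+2, d => (n.choose (t+d+1) : ℤ) * (n.choose (t+1) : ℤ)
      - (n.choose (t+d+2) : ℤ) * (n.choose t : ℤ)

lemma pascalZ (n k : ℕ) : ((n+1).choose (k+1) : ℤ) = (n.choose k : ℤ) + (n.choose (k+1) : ℤ) := by
  exact_mod_cast Nat.choose_succ_succ' n k

lemma icZ (n : ℕ) {i j : ℕ} (h : i = j) : (n.choose i : ℤ) = (n.choose j : ℤ) := by rw [h]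

lemma choose_zero (j : ℕ) (hj : 0 < j) : (Nat.choose 0 j : ℤ) = 0 := by
  rcases j with _ | j
  · omega
  · simp

lemma cfZ_rec (m t d : ℕ) :
    cfZ (m+1) (t+1) d = cfZ m (t+1) d + cfZ m t d + cfZ m t (d+1)
      + (if 1 ≤ d then cfZ m (t+1) (d-1) else 0) := by
  rcases m with _ | n
  · rcases t with _ | s
    · rcases d with _ | d
      · simp [cfZ]
      · simp [cfZ, choose_zero (d+1) (by omega)]
    · rcases d with _ | d <;>
        simp [cfZ, choose_zero (s+1) (by omega)]
  · rcases t with _ | s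
    · -- t = 0
      rcases d with _ | e
      · simp [cfZ]
      · simp only [cfZ, if_pos (by omega : 1 ≤ e+1), Nat.add_sub_cancel]
        rw [pascalZ n e]
        ring
    · rcases s with _ | s
      · -- t = 1
        rcases d with _ | e
        · simp only [cfZ, if_neg (by omega : ¬ 1 ≤ 0)]
          simp only [(by omega : (0:ℕ)+0+1 = 1), (by omega : (0:ℕ)+1 = 1), (by omega : (0:ℕ)+0+2 = 2)]
          have q1 : ((n+1).choose 1 : ℤ) = n.choose 0 + n.choose 1 := by
            have := pascalZ n 0; rwa [show (0:ℕ)+1 = 1 from by omega] at this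
          have q2 : ((n+1).choose 2 : ℤ) = n.choose 1 + n.choose 2 := by
            have := pascalZ n 1; rwa [show (1:ℕ)+1 = 2 from by omega] at this
          rw [q1, q2]
          simp only [Nat.choose_zero_right, Nat.cast_one]
          ring
        · simp only [cfZ, if_pos (by omega : 1 ≤ e+1), Nat.add_sub_cancel]
          simp only [(by omega : (0:ℕ)+(e+1)+1 = e+2), (by omega : (0:ℕ)+1 = 1),
            (by omega : (0:ℕ)+(e+1)+2 = e+3), (by omega : e+1+1 = e+2),
            (by omega : (0:ℕ)+e+1 = e+1), (by omega : (0:ℕ)+e+2 = e+2)]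
          have q1 : ((n+1).choose (e+2) : ℤ) = n.choose (e+1) + n.choose (e+2) := by
            have := pascalZ n (e+1); rwa [show e+1+1 = e+2 from by omega] at this
          have q2 : ((n+1).choose (e+3) : ℤ) = n.choose (e+2) + n.choose (e+3) := by
            have := pascalZ n (e+2); rwa [show e+2+1 = e+3 from by omega] at this
          have q3 : ((n+1).choose 1 : ℤ) = n.choose 0 + n.choose 1 := by
            have := pascalZ n 0; rwa [show (0:ℕ)+1 = 1 from by omega] at this
          rw [q1, q2, q3]
          simp only [Nat.choose_zero_right, Nat.cast_one]
          ring
      · -- t = s+2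
        rcases d with _ | e
        · simp only [cfZ, if_neg (by omega : ¬ 1 ≤ 0)]
          simp only [(by omega : s+1+0+1 = s+2), (by omega : s+1+1 = s+2),
            (by omega : s+1+0+2 = s+3), (by omega : s+0+1 = s+1), (by omega : s+0+2 = s+2),
            (by omega : s+(0+1)+1 = s+2), (by omega : s+(0+1)+2 = s+3)]
          have q1 : ((n+1).choose (s+2) : ℤ) = n.choose (s+1) + n.choose (s+2) := by
            have := pascalZ n (s+1); rwa [show s+1+1 = s+2 from by omega] at this
          have q2 : ((n+1).choose (s+3) : ℤ) = n.choose (s+2) + n.choose (s+3) := by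
            have := pascalZ n (s+2); rwa [show s+2+1 = s+3 from by omega] at this
          have q3 : ((n+1).choose (s+1) : ℤ) = n.choose s + n.choose (s+1) := pascalZ n s
          rw [q1, q2, q3]
          ring
        · simp only [cfZ, if_pos (by omega : 1 ≤ e+1), Nat.add_sub_cancel]
          simp only [(by omega : s+1+(e+1)+1 = s+e+3), (by omega : s+1+1 = s+2),
            (by omega : s+1+(e+1)+2 = s+e+4), (by omega : s+(e+1)+1 = s+e+2),
            (by omega : s+(e+1)+2 = s+e+3), (by omega : s+(e+1+1)+1 = s+e+3),
            (by omega : s+(e+1+1)+2 = s+e+4), (by omega : s+1+e+1 = s+e+2),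
            (by omega : s+1+e+2 = s+e+3)]
          have q1 : ((n+1).choose (s+e+3) : ℤ) = n.choose (s+e+2) + n.choose (s+e+3) := by
            have := pascalZ n (s+e+2); rwa [show s+e+2+1 = s+e+3 from by omega] at this
          have q2 : ((n+1).choose (s+e+4) : ℤ) = n.choose (s+e+3) + n.choose (s+e+4) := by
            have := pascalZ n (s+e+3); rwa [show s+e+3+1 = s+e+4 from by omega] at this
          have q3 : ((n+1).choose (s+2) : ℤ) = n.choose (s+1) + n.choose (s+2) := by
            have := pascalZ n (s+1); rwa [show s+1+1 = s+2 from by omega] at this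
          have q4 : ((n+1).choose (s+1) : ℤ) = n.choose s + n.choose (s+1) := pascalZ n s
          rw [q1, q2, q3, q4]
          ring

lemma final (m k : ℕ) (hm : 1 ≤ m) (hk : k ≤ m - 1) :
    ((k:ℤ) + 1) * cfZ m (k+1) 0 = (Nat.choose (m-1) k : ℤ) * (Nat.choose m k : ℤ) := by
  obtain ⟨n, rfl⟩ : ∃ n, m = n + 1 := ⟨m - 1, by omega⟩
  rw [Nat.add_sub_cancel] at hk ⊢
  rcases k with _ | j
  · simp [cfZ]
  · have hjn : j + 1 ≤ n := hk
    have l1 : cfZ (n+1) (j+2) 0 = (n.choose (j+1) : ℤ) * (n.choose (j+1) : ℤ)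
        - (n.choose (j+2) : ℤ) * (n.choose j : ℤ) := by
      simp only [cfZ]
    have f1 : (n.choose (j+2) : ℤ) * ((j:ℤ)+2) = (n.choose (j+1) : ℤ) * ((n:ℤ) - (j+1)) := by
      have := Nat.choose_succ_right_eq n (j+1)
      rw [show j+1+1 = j+2 from by omega] at this
      have h2 : ((n.choose (j+2) * (j+1+1) : ℕ) : ℤ) = ((n.choose (j+1) * (n - (j+1)) : ℕ) : ℤ) := by
        exact_mod_cast congrArg (Nat.cast : ℕ → ℤ) this
      push_cast [Nat.cast_sub hjn] at h2
      push_cast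
      linarith [h2]
    have f2 : (n.choose (j+1) : ℤ) * ((j:ℤ)+1) = (n.choose j : ℤ) * ((n:ℤ) - j) := by
      have := Nat.choose_succ_right_eq n j
      have h2 : ((n.choose (j+1) * (j+1) : ℕ) : ℤ) = ((n.choose j * (n - j) : ℕ) : ℤ) := by
        exact_mod_cast congrArg (Nat.cast : ℕ → ℤ) this
      push_cast [Nat.cast_sub (by omega : j ≤ n)] at h2
      push_cast
      linarith [h2]
    have f3 : ((n+1).choose (j+1) : ℤ) = (n.choose j : ℤ) + (n.choose (j+1) : ℤ) := pascalZ n j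
    rw [l1, f3]
    push_cast
    linear_combination ((n.choose (j+1) : ℤ)) * f2 - ((n.choose j : ℤ)) * f1


lemma F_eq (m t d : ℕ) : (F m t d : ℤ) = cfZ m t d := by
  induction m generalizing t d with
  | zero =>
    rw [F_zero]
    rcases t with _ | t
    · rcases d with _ | d <;> simp [cfZ]
    · rcases t with _ | t <;> simp [cfZ]
  | succ m ih =>
    rcases t with _ | t
    · rw [F_t_zero]; rcases m with _ | m <;> simp [cfZ]
    · rw [F_rec, cfZ_rec]
      push_cast
      rw [ih, ih, ih]
      rcases Nat.lt_or_ge d 1 with hd | hd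
      · simp [Nat.lt_one_iff.mp hd]
      · simp [hd, ih]

lemma build_mem {m k : ℕ} {q : List ℕ × List ℕ} (hq : q ∈ Dom m (k+1) 0) :
    IsDyck m (build q.1 q.2) ∧ flaws (build q.1 q.2) = m ∧ peaks (build q.1 q.2) = k := by
  obtain ⟨a, b⟩ := q
  rw [mem_Dom_iff] at hq
  obtain ⟨h1, h2, h3, h4, h5, h6, h7⟩ := hq
  have hab : a.length = b.length := by omega
  have hD : IsDyck m (build a b) := by
    constructor
    · rw [build_length a b hab]; omega
    · rw [build_count_true a b hab]; omega
  refine ⟨hD, ?_, ?_⟩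
  · rw [flaws_eq_iff m _ hD]
    intro j
    have := build_prefix a b 0 hab (fun i => by simpa using h7 i) j
    simpa using this
  · rw [build_peaks a b hab h3 h4]
    omega

lemma p_eq_F (m k : ℕ) (hm : 1 ≤ m) : p m m k = F m (k+1) 0 := by
  rw [p, F, ← Nat.card_coe_set_eq]
  refine (Nat.card_eq_of_bijective
    (fun q => ⟨build q.1.1 q.1.2, (build_mem q.2).1, (build_mem q.2).2.1,
      (build_mem q.2).2.2⟩) ⟨?_, ?_⟩).symm
  · -- injective
    rintro ⟨⟨a, b⟩, hq⟩ ⟨⟨a', b'⟩, hq'⟩ h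
    simp only [Subtype.mk.injEq] at h
    rw [mem_Dom_iff] at hq hq'
    obtain ⟨g1, g2, g3, g4, -⟩ := hq
    obtain ⟨g1', g2', g3', g4', -⟩ := hq'
    obtain ⟨hA, hB⟩ := build_inj a b a' b' (by omega) (by omega) g3 g4 g3' g4' h
    apply Subtype.ext
    simp only [hA, hB]
  · -- surjective
    rintro ⟨l, hD, hfl, hpk⟩
    have hpre : ∀ j, (l.take j).count true ≤ (l.take j).count false :=
      (flaws_eq_iff m l hD).mp hfl
    have hhead : l = [] ∨ l.head? = some false := by
      rcases l with _ | ⟨c, l'⟩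
      · left; rfl
      · rcases c
        · right; rfl
        · exfalso
          have := hpre 1
          simp [List.take_succ_cons] at this
    have hcb := count_bool l
    obtain ⟨hl2m, hct⟩ := hD
    have htot : l.count true = 0 + l.count false := by omega
    obtain ⟨a, b, hab, hpa, hpb, hlb, hsa, hsb, hdom⟩ :=
      decomp l.length l (le_refl _) 0 (by simpa using hpre) htot hhead
    have hane : a ≠ [] := by
      rintro rfl
      have hb : b = [] := List.length_eq_zero_iff.mp (by simpa using hab.symm)
      subst hb
      rw [hlb] at hl2m
      simp [build] at hl2m
      omega
    have halen : a.length = k + 1 := by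
      have hbp := build_peaks a b hab hpa hpb
      rw [← hlb, hpk] at hbp
      have := List.length_pos_iff.mpr hane
      omega
    refine ⟨⟨(a, b), ?_⟩, ?_⟩
    · rw [mem_Dom_iff]
      refine ⟨by omega, by omega, hpa, hpb, by omega, by omega,
        fun i => by simpa using hdom i⟩
    · exact Subtype.ext hlb.symm

end AFP

/-- For all-flawed Dyck paths: `(k+1) p_{m,m,k} = C(m-1,k) C(m,k)`. -/
theorem all_flaws_peaks (m k : ℕ) (hm : 1 ≤ m) (hk : k ≤ m - 1) :
    (k + 1) * p m m k = Nat.choose (m - 1) k * Nat.choose m k := by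
  have h1 := AFP.p_eq_F m k hm
  have h2 := AFP.F_eq m (k+1) 0
  have h3 := AFP.final m k hm hk
  have : ((k:ℤ) + 1) * (p m m k : ℤ) = (Nat.choose (m-1) k : ℤ) * (Nat.choose m k : ℤ) := by
    rw [h1, h2, h3]
  exact_mod_cast this
end
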